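/- arXiv:2112.00070 — 11 statements merged into one kernel-verified Lean document; each statement's English description precedes it below -/
import Mathlib

section
/- For integers s ≥ 2 and nonnegative integers t1, t2, k with t1 ≤ k-3, t2 ≤ k-3, and k-1 ≤ t1 + t2 ≤ 2(k-3), the binomial coefficients satisfy C(t1+1, s) + C(t2+1, s) ≤ C(k-1, s) + C(t1+t2-k+3, s). -/
lemma conv_aux (m n a d : ℕ) (h : d ≤ a) :
    Nat.choose a (m + 1) + Nat.choose (d + n) (m + 1) ≤
      Nat.choose (a + n) (m + 1) + Nat.choose d (m + 1) := by
  induction n with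
  | zero => simp
  | succ n ih =>
    have e1 : Nat.choose (d + n + 1) (m + 1) =
        Nat.choose (d + n) m + Nat.choose (d + n) (m + 1) :=
      Nat.choose_succ_succ' (d + n) m
    have e2 : Nat.choose (a + n + 1) (m + 1) =
        Nat.choose (a + n) m + Nat.choose (a + n) (m + 1) :=
      Nat.choose_succ_succ' (a + n) m
    have hle : Nat.choose (d + n) m ≤ Nat.choose (a + n) m :=
      Nat.choose_le_choose m (by omega)
    have : d + (n + 1) = d + n + 1 := by omega
    rw [this, e1, show a + (n + 1) = a + n + 1 from by omega, e2]
    omega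

theorem stmt_1 (s t1 t2 k : ℕ) (hs : 2 ≤ s)
    (h1 : t1 ≤ k - 3) (h2 : t2 ≤ k - 3)
    (hlo : k - 1 ≤ t1 + t2) (hhi : t1 + t2 ≤ 2 * (k - 3)) :
    Nat.choose (t1 + 1) s + Nat.choose (t2 + 1) s ≤
      Nat.choose (k - 1) s + Nat.choose (t1 + t2 + 3 - k) s := by
  rcases le_or_gt k 3 with hk | hk
  · have ht1 : t1 = 0 := by omega
    have ht2 : t2 = 0 := by omega
    have hk1 : k ≤ 1 := by omega
    have : Nat.choose 1 s = 0 := Nat.choose_eq_zero_of_lt (by omega)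
    simp [ht1, ht2, this]
  · obtain ⟨m, rfl⟩ : ∃ m, s = m + 1 := ⟨s - 1, by omega⟩
    have key := conv_aux m (k - 2 - t1) (t1 + 1) (t1 + t2 + 3 - k) (by omega)
    have e1 : t1 + 1 + (k - 2 - t1) = k - 1 := by omega
    have e2 : t1 + t2 + 3 - k + (k - 2 - t1) = t2 + 1 := by omega
    rw [e1, e2] at key
    omega
end

section
/- For integers s ≥ 3 and nonnegative integers t1, t2, k ≥ 5 with t1 ≤ k-4, t2 ≤ k-4, and k-3 ≤ t1 + t2 ≤ 2(k-4), the binomial coefficients satisfy C(t1+2, s) + C(t2+2, s) ≤ C(k-1, s) + C(t1+t2-k+5, s). -/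
lemma step_choose (x y s : ℕ) (h : x ≤ y + 1) :
    Nat.choose x s + Nat.choose y s ≤ Nat.choose (x - 1) s + Nat.choose (y + 1) s := by
  cases x with
  | zero =>
      simp only [Nat.zero_sub]
      exact Nat.add_le_add le_rfl (Nat.choose_le_choose s (Nat.le_succ y))
  | succ x =>
      cases s with
      | zero => simp
      | succ s =>
          have hx : (x + 1).choose (s + 1) = x.choose s + x.choose (s + 1) :=
            Nat.choose_succ_succ' x s ▸ rfl
          have hy : (y + 1).choose (s + 1) = y.choose s + y.choose (s + 1) :=
            Nat.choose_succ_succ' y s ▸ rfl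
          have hxy : x.choose s ≤ y.choose s :=
            Nat.choose_le_choose s (by omega)
          simp only [Nat.succ_sub_one]
          omega

lemma shift_choose (d x y s : ℕ) (h : x ≤ y + 1) :
    Nat.choose x s + Nat.choose y s ≤ Nat.choose (x - d) s + Nat.choose (y + d) s := by
  induction d generalizing x y with
  | zero => simp
  | succ d ih =>
      calc Nat.choose x s + Nat.choose y s
          ≤ Nat.choose (x - 1) s + Nat.choose (y + 1) s := step_choose x y s h
        _ ≤ Nat.choose (x - 1 - d) s + Nat.choose (y + 1 + d) s := ih _ _ (by omega)
        _ = Nat.choose (x - (d + 1)) s + Nat.choose (y + (d + 1)) s := by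
            congr 1 <;> congr 1 <;> omega

lemma main_aux (s a b k : ℕ) (hk : 5 ≤ k) (hab : a ≤ b) (hb : b ≤ k - 4)
    (hlo : k - 3 ≤ a + b) :
    Nat.choose (a + 2) s + Nat.choose (b + 2) s ≤
      Nat.choose (k - 1) s + Nat.choose (a + b + 5 - k) s := by
  have h := shift_choose (k - 3 - b) (a + 2) (b + 2) s (by omega)
  have e1 : a + 2 - (k - 3 - b) = a + b + 5 - k := by omega
  have e2 : b + 2 + (k - 3 - b) = k - 1 := by omega
  rw [e1, e2] at h
  omega

theorem stmt_3 (s t1 t2 k : ℕ) (hs : 3 ≤ s) (hk : 5 ≤ k)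
    (h1 : t1 ≤ k - 4) (h2 : t2 ≤ k - 4)
    (hlo : k - 3 ≤ t1 + t2) (hhi : t1 + t2 ≤ 2 * (k - 4)) :
    Nat.choose (t1 + 2) s + Nat.choose (t2 + 2) s ≤
      Nat.choose (k - 1) s + Nat.choose (t1 + t2 + 5 - k) s := by
  rcases le_total t1 t2 with h | h
  · exact main_aux s t1 t2 k hk h h2 hlo
  · have := main_aux s t2 t1 k hk h h1 (by omega)
    have e : t2 + t1 + 5 - k = t1 + t2 + 5 - k := by omega
    rw [e] at this
    omega
end

section
/- Let n ≥ k ≥ 5 and s ≥ 2 be integers. Define f_s(n,k,a) = C(k-a, s) + (n-k+a)·C(a, s-1), and define ψ_s(n,k) = r·C(k-1, s) + C(t+1, s) where n-1 = r(k-2) + t with 0 ≤ t ≤ k-3. Then max{f_s(n,k,2), f_s(n,k,⌊(k-1)/2⌋)} ≤ ψ_s(n,k). -/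
open Nat

lemma two_choose_two (b : ℕ) : 2 * b.choose 2 = b * (b - 1) := by
  induction b with
  | zero => simp
  | succ c ih =>
    rw [Nat.choose_succ_succ, Nat.mul_add, ih, Nat.choose_one_right, Nat.succ_sub_one]
    cases c with
    | zero => simp
    | succ d => simp [Nat.succ_sub_one]; ring

lemma hockey (b u : ℕ) : ∀ t, (t - b) * b.choose u ≤ (t+1).choose (u+1) := by
  intro t
  induction t with
  | zero => simp [Nat.sub_eq_zero_of_le (Nat.zero_le b)]
  | succ t ih =>
    rcases le_or_gt (t+1) b with h | h
    · simp [Nat.sub_eq_zero_of_le h]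
    · have hmono : b.choose u ≤ (t+1).choose u := Nat.choose_le_choose u (by omega)
      have hp : (t+2).choose (u+1) = (t+1).choose u + (t+1).choose (u+1) :=
        Nat.choose_succ_succ _ _
      have he : (t + 1 - b) * b.choose u = (t - b) * b.choose u + b.choose u := by
        have h2 : t + 1 - b = (t - b) + 1 := by omega
        rw [h2, add_mul, one_mul]
      rw [hp, he]
      omega

-- b * C(b,u+1) ≤ C(b,2) * C(b,u)  for u ≥ 1
lemma bC (b u : ℕ) (hu : 1 ≤ u) : b * b.choose (u+1) ≤ b.choose 2 * b.choose u := by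
  rcases Nat.eq_zero_or_pos b with rfl | hb
  · simp
  have key : b.choose (u+1) * (u+1) = b.choose u * (b - u) := Nat.choose_succ_right_eq b u
  have h2 : 2 * b.choose 2 = b * (b - 1) := two_choose_two b
  refine Nat.le_of_mul_le_mul_left ?_ (show 0 < 2*(u+1) by omega)
  calc 2 * (u+1) * (b * b.choose (u+1))
      = 2 * b * (b.choose (u+1) * (u+1)) := by ring
    _ = 2 * b * (b.choose u * (b - u)) := by rw [key]
    _ = (2 * (b - u)) * b * b.choose u := by ring
    _ ≤ ((u+1) * (b - 1)) * b * b.choose u := by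
        have : 2 * (b - u) ≤ (u+1) * (b-1) := by
          have h3 : b - u ≤ b - 1 := by omega
          calc 2 * (b - u) ≤ 2 * (b-1) := by omega
            _ ≤ (u+1) * (b-1) := Nat.mul_le_mul_right _ (by omega)
        exact Nat.mul_le_mul_right _ (Nat.mul_le_mul_right _ this)
    _ = (u+1) * ((b * (b-1)) * b.choose u) := by ring
    _ = (u+1) * ((2 * b.choose 2) * b.choose u) := by rw [h2]
    _ = 2 * (u+1) * (b.choose 2 * b.choose u) := by ring

-- G : t * C(b,s-1) ≤ C(b,2)*C(b,s-2) + C(t+1,s)  stated with u = s-2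
lemma lemG (b u t : ℕ) (hb : 2 ≤ b) : t * b.choose (u+1) ≤ b.choose 2 * b.choose u + (t+1).choose (u+2) := by
  rcases Nat.eq_zero_or_pos u with rfl | hu
  · -- u = 0 : t * b ≤ C(b,2) + C(t+1,2)
    simp only [Nat.zero_add, Nat.choose_one_right, Nat.choose_zero_right, Nat.mul_one]
    have h1 : 2 * b.choose 2 = b * (b-1) := two_choose_two b
    have h2 : 2 * (t+1).choose 2 = (t+1) * t := by simpa using two_choose_two (t+1)
    refine Nat.le_of_mul_le_mul_left ?_ (show 0 < 2 by omega)
    rw [Nat.mul_add, h1, h2]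
    obtain ⟨c, rfl⟩ : ∃ c, b = c + 1 := ⟨b-1, by omega⟩
    simp only [Nat.add_sub_cancel]
    rcases le_total t c with h | h
    · obtain ⟨d, rfl⟩ := Nat.exists_eq_add_of_le h
      nlinarith
    · obtain ⟨d, rfl⟩ := Nat.exists_eq_add_of_le h
      have hd : d ≤ d * d := by
        rcases Nat.eq_zero_or_pos d with rfl | hd
        · simp
        · exact Nat.le_mul_of_pos_left d hd
      nlinarith
  · -- u ≥ 1
    have h1 : (t - b) * b.choose (u+1) ≤ (t+1).choose (u+2) := hockey b (u+1) t
    have h2 : b * b.choose (u+1) ≤ b.choose 2 * b.choose u := bC b u hu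
    have h3 : t * b.choose (u+1) ≤ (t - b) * b.choose (u+1) + b * b.choose (u+1) := by
      have ht : t ≤ (t - b) + b := by omega
      calc t * b.choose (u+1) ≤ ((t-b) + b) * b.choose (u+1) := Nat.mul_le_mul_right _ ht
        _ = _ := by rw [add_mul]
    omega

-- C(m,u+1) + d*C(m,u) ≤ C(m+d, u+1)
lemma lemC1 (m u : ℕ) : ∀ d, m.choose (u+1) + d * m.choose u ≤ (m+d).choose (u+1) := by
  intro d
  induction d with
  | zero => simp
  | succ d ih =>
    have hp : (m+d+1).choose (u+1) = (m+d).choose u + (m+d).choose (u+1) :=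
      Nat.choose_succ_succ _ _
    have hmono : m.choose u ≤ (m+d).choose u := Nat.choose_le_choose u (by omega)
    have : m + (d+1) = m + d + 1 := by omega
    rw [this, hp]
    have : (d+1) * m.choose u = d * m.choose u + m.choose u := by ring
    omega

-- C(m,u+2) + d*C(m,u+1) + C(d,2)*C(m,u) ≤ C(m+d, u+2)
lemma lemC2 (m u : ℕ) : ∀ d, m.choose (u+2) + d * m.choose (u+1) + d.choose 2 * m.choose u ≤ (m+d).choose (u+2) := by
  intro d
  induction d with
  | zero => simp
  | succ d ih =>
    have hp : (m+d+1).choose (u+2) = (m+d).choose (u+1) + (m+d).choose (u+2) :=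
      Nat.choose_succ_succ _ _
    have h1 : m.choose (u+1) + d * m.choose u ≤ (m+d).choose (u+1) := lemC1 m u d
    have hdp : (d+1).choose 2 = d + d.choose 2 := by
      rw [Nat.choose_succ_succ, Nat.choose_one_right]
    have e1 : m + (d+1) = m + d + 1 := by omega
    rw [e1, hp, hdp]
    have e2 : (d+1) * m.choose (u+1) = d * m.choose (u+1) + m.choose (u+1) := by ring
    have e3 : (d + d.choose 2) * m.choose u = d * m.choose u + d.choose 2 * m.choose u := by ring
    rw [e2, e3]
    omega

-- Vandermonde two-term: for s ≥ 3, 2*b*C(b,s-1) ≤ C(2b, s), stated s = v+3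
lemma vand (b v : ℕ) : (2*b) * b.choose (v+2) ≤ (b+b).choose (v+3) := by
  have hv := Nat.add_choose_eq b b (v+3)
  have hmem1 : ((1 : ℕ), v+2) ∈ Finset.HasAntidiagonal.antidiagonal (v+3) := by
    simp; omega
  have hmem2 : ((v+2 : ℕ), 1) ∈ Finset.HasAntidiagonal.antidiagonal (v+3) := by
    simp
  have hne : ((1:ℕ), v+2) ≠ ((v+2:ℕ), 1) := by
    intro h; simp at h
  have hsub : ({((1:ℕ), v+2), ((v+2:ℕ), 1)} : Finset (ℕ × ℕ)) ⊆ Finset.HasAntidiagonal.antidiagonal (v+3) := by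
    intro p hp
    simp only [Finset.mem_insert, Finset.mem_singleton] at hp
    rcases hp with rfl | rfl <;> assumption
  have hsum : ∑ ij ∈ ({((1:ℕ), v+2), ((v+2:ℕ), 1)} : Finset (ℕ × ℕ)), b.choose ij.1 * b.choose ij.2
      ≤ ∑ ij ∈ Finset.HasAntidiagonal.antidiagonal (v+3), b.choose ij.1 * b.choose ij.2 :=
    Finset.sum_le_sum_of_subset hsub
  rw [Finset.sum_pair hne] at hsum
  simp only [Nat.choose_one_right] at hsum
  calc (2*b) * b.choose (v+2) = b * b.choose (v+2) + b.choose (v+2) * b := by ring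
    _ ≤ _ := by rw [hv]; exact hsum

lemma lemA (k b s : ℕ) (hs : 2 ≤ s) (h1 : k - 2 ≤ 2*b) (h2 : 2*b ≤ k-1) :
    (k-2) * b.choose (s-1) ≤ (k-1).choose s := by
  rcases Nat.lt_or_ge s 3 with h | h
  · have hs2 : s = 2 := by omega
    subst hs2
    rw [show (2:ℕ)-1 = 1 from rfl, Nat.choose_one_right]
    refine Nat.le_of_mul_le_mul_left ?_ (show 0 < 2 by omega)
    have h3 := two_choose_two (k-1)
    have h4 : (k-1) - 1 = k - 2 := by omega
    rw [h4] at h3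
    calc 2*((k-2)*b) = (k-2)*(2*b) := by ring
      _ ≤ (k-2)*(k-1) := Nat.mul_le_mul_left _ h2
      _ = (k-1)*(k-2) := by ring
      _ = 2*((k-1).choose 2) := h3.symm
  · obtain ⟨v, rfl⟩ : ∃ v, s = v+3 := ⟨s-3, by omega⟩
    rw [show (v+3)-1 = v+2 from rfl]
    calc (k-2) * b.choose (v+2) ≤ (2*b) * b.choose (v+2) := Nat.mul_le_mul_right _ h1
      _ ≤ (b+b).choose (v+3) := vand b v
      _ ≤ (k-1).choose (v+3) := Nat.choose_le_choose _ (by omega)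

lemma lemB (k b t u : ℕ) (hb : 2 ≤ b) (h3 : b+1 ≤ k-b) (h4 : k-b + (b-1) = k-1) :
    (k-b).choose (u+2) + (t + (b-1)) * b.choose (u+1)
      ≤ (k-1).choose (u+2) + (t+1).choose (u+2) := by
  obtain ⟨c, rfl⟩ : ∃ c, b = c + 1 := ⟨b-1, by omega⟩
  simp only [Nat.add_sub_cancel] at h4 ⊢
  have hC := lemC2 (k-(c+1)) u c
  rw [h4] at hC
  have hG := lemG (c+1) u t hb
  have hc2 : (c+1).choose 2 = c + c.choose 2 := by
    rw [Nat.choose_succ_succ, Nat.choose_one_right]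
  rw [hc2, add_mul] at hG
  have hPas : (c+2).choose (u+1) = (c+1).choose u + (c+1).choose (u+1) :=
    Nat.choose_succ_succ (c+1) u
  have hm1 : (c+2).choose (u+1) ≤ (k-(c+1)).choose (u+1) := Nat.choose_le_choose _ (by omega)
  have hm0 : (c+1).choose u ≤ (k-(c+1)).choose u := Nat.choose_le_choose _ (by omega)
  have g2' : c * (c+2).choose (u+1) = c * (c+1).choose u + c * (c+1).choose (u+1) := by
    rw [hPas]; ring
  have g2'' : c * (c+2).choose (u+1) ≤ c * (k-(c+1)).choose (u+1) := Nat.mul_le_mul_left _ hm1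
  have g3 : c.choose 2 * (c+1).choose u ≤ c.choose 2 * (k-(c+1)).choose u :=
    Nat.mul_le_mul_left _ hm0
  rw [add_mul]
  linarith [hG, g2', g2'', g3, hC]

theorem stmt_5 (n k s r t : ℕ) (hk : 5 ≤ k) (hn : k ≤ n) (hs : 2 ≤ s)
    (ht : t ≤ k - 3) (hrt : n - 1 = r * (k - 2) + t) :
    max (Nat.choose (k - 2) s + (n + 2 - k) * Nat.choose 2 (s - 1))
        (Nat.choose (k - (k - 1) / 2) s + (n + (k - 1) / 2 - k) * Nat.choose ((k - 1) / 2) (s - 1))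
      ≤ r * Nat.choose (k - 1) s + Nat.choose (t + 1) s := by
  set b := (k-1)/2 with hbdef
  have hb : 2 ≤ b := by omega
  have hr : 1 ≤ r := by
    rcases Nat.eq_zero_or_pos r with rfl | h
    · simp at hrt; omega
    · exact h
  obtain ⟨R, rfl⟩ : ∃ R, r = R + 1 := ⟨r-1, by omega⟩
  have hrt' : n - 1 = R * (k-2) + (k-2) + t := by
    rw [hrt, add_mul, one_mul]
  set P := R * (k-2) with hPdef
  have e1 : n + 2 - k = P + (t+1) := by omega
  have e2 : n + b - k = P + (t + (b-1)) := by omega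
  have hPB : ∀ C D : ℕ, (k-2) * C ≤ D → P * C ≤ R * D := by
    intro C D h
    calc P * C = R * ((k-2) * C) := by rw [hPdef, mul_assoc]
      _ ≤ R * D := Nat.mul_le_mul_left _ h
  apply max_le
  · -- f(2) ≤ ψ
    rw [e1]
    rcases Nat.lt_or_ge s 4 with h4 | h4
    · interval_cases s
      · -- s = 2
        rw [show (2:ℕ)-1 = 1 from rfl, Nat.choose_one_right]
        have hx : (k-1).choose 2 = (k-2).choose 2 + (k-2) := by
          have h := Nat.choose_succ_succ (k-2) 1
          norm_num [Nat.choose_one_right] at h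
          rw [show k-1 = (k-2)+1 by omega]
          omega
        have h2 := two_choose_two (k-1)
        rw [show (k-1)-1 = k-2 from by omega] at h2
        have h3 : 4*(k-2) ≤ (k-1)*(k-2) := Nat.mul_le_mul_right _ (by omega)
        have hA : (k-2)*2 ≤ (k-1).choose 2 := by omega
        have hP2 : P * 2 ≤ R * ((k-1).choose 2) := hPB 2 _ hA
        have hT : 2*t+2 ≤ (k-2) + (t+1).choose 2 := by
          rcases Nat.lt_or_ge t 2 with h5 | h5
          · interval_cases t <;> simp_all <;> omega
          · have h6 := two_choose_two (t+1)
            rw [Nat.add_sub_cancel] at h6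
            have h7 : (t+1)*2 ≤ (t+1)*t := Nat.mul_le_mul_left _ h5
            omega
        have exp1 : (P + (t+1)) * 2 = P * 2 + (t+1) * 2 := add_mul _ _ _
        have exp2 : (R+1) * ((k-1).choose 2) = R * ((k-1).choose 2) + (k-1).choose 2 := by ring
        rw [exp1, exp2]
        linarith [hx, hP2, hT]
      · -- s = 3
        rw [show (3:ℕ)-1 = 2 from rfl]
        have hc22 : (2:ℕ).choose 2 = 1 := by decide
        rw [hc22, mul_one]
        have hx : (k-1).choose 3 = (k-2).choose 3 + (k-2).choose 2 := by
          have h := Nat.choose_succ_succ (k-2) 2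
          norm_num at h
          rw [show k-1 = (k-2)+1 by omega]
          omega
        have h2 := two_choose_two (k-2)
        rw [show (k-2)-1 = k-3 from by omega] at h2
        have h3 : (k-2)*2 ≤ (k-2)*(k-3) := Nat.mul_le_mul_left _ (by omega)
        have hA : k-2 ≤ (k-2).choose 2 := by omega
        have hA2 : k-2 ≤ (k-1).choose 3 := by omega
        have hP2 : P * 1 ≤ R * ((k-1).choose 3) := hPB 1 _ (by omega)
        have hT : t+1 ≤ (k-2).choose 2 := by omega
        have exp2 : (R+1) * ((k-1).choose 3) = R * ((k-1).choose 3) + (k-1).choose 3 := by ring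
        rw [exp2]
        linarith [hx, hP2, hT]
    · -- s ≥ 4
      rw [Nat.choose_eq_zero_of_lt (show 2 < s-1 by omega), mul_zero, add_zero]
      calc (k-2).choose s ≤ (k-1).choose s := Nat.choose_le_choose _ (by omega)
        _ ≤ (R+1) * (k-1).choose s := Nat.le_mul_of_pos_left _ (by omega)
        _ ≤ (R+1) * (k-1).choose s + (t+1).choose s := Nat.le_add_right _ _
  · -- f(b) ≤ ψ
    rw [e2]
    obtain ⟨u, rfl⟩ : ∃ u, s = u + 2 := ⟨s-2, by omega⟩
    rw [show (u+2)-1 = u+1 from rfl]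
    have hLA : (k-2) * b.choose (u+1) ≤ (k-1).choose (u+2) := by
      have := lemA k b (u+2) (by omega) (by omega) (by omega)
      rwa [show (u+2)-1 = u+1 from rfl] at this
    have hLB := lemB k b t u hb (by omega) (by omega)
    have hP2 : P * b.choose (u+1) ≤ R * ((k-1).choose (u+2)) := hPB _ _ hLA
    have exp1 : (P + (t+(b-1))) * b.choose (u+1)
        = P * b.choose (u+1) + (t+(b-1)) * b.choose (u+1) := add_mul _ _ _
    have exp2 : (R+1) * ((k-1).choose (u+2))
        = R * ((k-1).choose (u+2)) + (k-1).choose (u+2) := by ring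
    rw [exp1, exp2]
    linarith [hLB, hP2]
end

section
/- Let G be a 2-connected graph and uv an edge of G such that u and v have no common neighbor. If the graph G/uv obtained by contracting the edge uv is not 2-connected, then {u, v} is a vertex cut of G. -/
/-- A graph is 2-connected if it has at least 3 vertices and remains connected
after deleting any single vertex. -/
def TwoConnected {V : Type*} (G : SimpleGraph V) : Prop :=
  3 ≤ Nat.card V ∧ ∀ v : V, (G.induce {w : V | w ≠ v}).Connected

/-- `{u, v}` is a vertex cut of `G`: `G - {u,v}` is disconnected. -/
def IsCutPair {V : Type*} (G : SimpleGraph V) (u v : V) : Prop :=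
  ¬ (G.induce {w : V | w ≠ u ∧ w ≠ v}).Connected

/-- The simple graph obtained from `G` by contracting the edge `uv`
(identifying `v` with `u` and deleting `v`). -/
def contractGraph {V : Type*} (G : SimpleGraph V) (u v : V) :
    SimpleGraph {w : V // w ≠ v} :=
  SimpleGraph.fromRel fun a b =>
    G.Adj a.val b.val ∨ (a.val = u ∧ G.Adj v b.val) ∨ (b.val = u ∧ G.Adj v a.val)

/-- A surjective map that sends edges to edges-or-collapses preserves connectivity. -/
lemma connected_of_map {α β : Type*} {A : SimpleGraph α} {B : SimpleGraph β} (f : α → β)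
    (hsurj : Function.Surjective f)
    (hadj : ∀ a b : α, A.Adj a b → f a = f b ∨ B.Adj (f a) (f b))
    (hA : A.Connected) : B.Connected := by
  have hreach : ∀ a b : α, B.Reachable (f a) (f b) := by
    intro a b
    obtain ⟨p⟩ := hA.preconnected a b
    induction p with
    | nil => exact SimpleGraph.Reachable.refl _
    | cons h p ih =>
      rcases hadj _ _ h with he | hadj'
      · exact he ▸ ih
      · exact hadj'.reachable.trans ih
  obtain ⟨a0⟩ := hA.nonempty
  haveI : Nonempty β := ⟨f a0⟩
  refine ⟨fun y1 y2 => ?_⟩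
  obtain ⟨a, rfl⟩ := hsurj y1
  obtain ⟨b, rfl⟩ := hsurj y2
  exact hreach a b

/-- In a connected graph with (at most) two vertices, the two vertices are adjacent. -/
lemma adj_of_two {α : Type*} {A : SimpleGraph α} (h : A.Connected) (a b : α) (hab : a ≠ b)
    (hall : ∀ c : α, c = a ∨ c = b) : A.Adj a b := by
  obtain ⟨p⟩ := h.preconnected a b
  cases p with
  | nil => exact absurd rfl hab
  | @cons _ c _ h' p' =>
    rcases hall c with rfl | rfl
    · exact absurd rfl h'.ne'
    · exact h'

theorem stmt_6 {V : Type*} (G : SimpleGraph V) (u v : V)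
    (h2c : TwoConnected G) (huv : G.Adj u v)
    (hcn : ∀ w : V, ¬ (G.Adj u w ∧ G.Adj v w))
    (hnot : ¬ TwoConnected (contractGraph G u v)) :
    IsCutPair G u v := by
  classical
  have hfinV : Finite V := Nat.finite_of_card_ne_zero (by have := h2c.1; omega)
  haveI := Fintype.ofFinite V
  have hVcard : 3 ≤ Fintype.card V := by
    rw [← Nat.card_eq_fintype_card]; exact h2c.1
  have hne : u ≠ v := huv.ne
  have hnonempty : Nonempty V := ⟨u⟩
  have hsub : Nat.card {w : V // w ≠ v} = Fintype.card V - 1 := by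
    rw [Nat.card_eq_fintype_card]
    simp [Fintype.card_subtype_compl]
  -- at least 4 vertices
  have hcard4 : 4 ≤ Fintype.card V := by
    by_contra hlt
    have h3 : Fintype.card V = 3 := by omega
    obtain ⟨w, hw⟩ : ∃ w : V, w ∉ ({u, v} : Finset V) := by
      by_contra hc
      push_neg at hc
      have : (Finset.univ : Finset V) ⊆ {u, v} := fun x _ => hc x
      have := Finset.card_le_card this
      simp only [Finset.card_univ, h3] at this
      have h2 : ({u, v} : Finset V).card ≤ 2 := Finset.card_insert_le _ _ |>.trans (by simp)
      omega
    simp only [Finset.mem_insert, Finset.mem_singleton, not_or] at hw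
    obtain ⟨hwu, hwv⟩ := hw
    have huniv : ({u, v, w} : Finset V) = Finset.univ := by
      apply Finset.eq_univ_of_card
      rw [h3]
      rw [Finset.card_insert_of_notMem (by simp [hne, Ne.symm hwu]),
        Finset.card_insert_of_notMem (by simp [Ne.symm hwv])]
      simp
    have hall : ∀ z : V, z = u ∨ z = v ∨ z = w := by
      intro z
      have : z ∈ ({u, v, w} : Finset V) := huniv ▸ Finset.mem_univ z
      simpa using this
    -- G.Adj u w from connectivity of G - v
    have hadjuw : G.Adj u w := by
      have hc := h2c.2 v
      have := adj_of_two hc (⟨u, hne⟩ : {z : V | z ≠ v}) ⟨w, hwv⟩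
        (by simp [Subtype.ext_iff]; exact Ne.symm hwu)
        (by
          rintro ⟨c, hc'⟩
          rcases hall c with rfl | rfl | rfl
          · exact Or.inl rfl
          · exact absurd rfl hc'
          · exact Or.inr rfl)
      exact this
    have hadjvw : G.Adj v w := by
      have hc := h2c.2 u
      have := adj_of_two hc (⟨v, hne.symm⟩ : {z : V | z ≠ u}) ⟨w, hwu⟩
        (by simp [Subtype.ext_iff]; exact Ne.symm hwv)
        (by
          rintro ⟨c, hc'⟩
          rcases hall c with rfl | rfl | rfl
          · exact absurd rfl hc'
          · exact Or.inl rfl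
          · exact Or.inr rfl)
      exact this
    exact hcn w ⟨hadjuw, hadjvw⟩
  -- extract the cut vertex of the contracted graph
  have hcard' : 3 ≤ Nat.card {w : V // w ≠ v} := by omega
  obtain ⟨x, hx⟩ : ∃ x : {w : V // w ≠ v},
      ¬ ((contractGraph G u v).induce {y : {w : V // w ≠ v} | y ≠ x}).Connected := by
    by_contra h
    push_neg at h
    exact hnot ⟨hcard', h⟩
  by_cases hxu : x.val = u
  · -- x is the contracted vertex: {u,v} is a cut pair
    intro hconn
    apply hx
    refine connected_of_map
      (fun w => ⟨⟨w.val, w.2.2⟩, ?_⟩) ?_ ?_ hconn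
    · intro heq
      exact w.2.1 ((congrArg Subtype.val heq).trans hxu)
    · rintro ⟨⟨y, hyv⟩, hyx⟩
      have hyu : y ≠ u := by
        intro h
        exact hyx (Subtype.ext (h.trans hxu.symm))
      exact ⟨⟨y, hyu, hyv⟩, rfl⟩
    · rintro ⟨a, hau, hav⟩ ⟨b, hbu, hbv⟩ hab
      right
      simp only [SimpleGraph.comap_adj, Function.Embedding.coe_subtype] at hab ⊢
      rw [contractGraph, SimpleGraph.fromRel_adj]
      exact ⟨fun h => hab.ne (congrArg Subtype.val h), Or.inl (Or.inl hab)⟩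
  · -- x ≠ u: deleting x from the contraction stays connected, contradiction
    exfalso
    apply hx
    refine connected_of_map
      (fun w : {z : V | z ≠ x.val} =>
        if h : w.val = v then ⟨⟨u, hne⟩, fun he => hxu ((congrArg Subtype.val he).symm)⟩
        else ⟨⟨w.val, h⟩, fun he => w.2 (congrArg Subtype.val he)⟩)
      ?_ ?_ (h2c.2 x.val)
    · rintro ⟨⟨y, hyv⟩, hyx⟩
      have hyx' : y ≠ x.val := fun h => hyx (Subtype.ext h)
      exact ⟨⟨y, hyx'⟩, dif_neg hyv⟩
    · rintro ⟨a, hax⟩ ⟨b, hbx⟩ hab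
      simp only [SimpleGraph.comap_adj, Function.Embedding.coe_subtype] at hab
      by_cases hav : a = v
      · have hbv : b ≠ v := fun h => hab.ne (hav.trans h.symm)
        by_cases hbu : b = u
        · left
          simp only [dif_pos hav, dif_neg hbv]
          exact Subtype.ext (Subtype.ext hbu.symm)
        · right
          simp only [SimpleGraph.comap_adj, Function.Embedding.coe_subtype,
            dif_pos hav, dif_neg hbv]
          rw [contractGraph, SimpleGraph.fromRel_adj]
          exact ⟨fun h => hbu (congrArg Subtype.val h).symm,
            Or.inl (Or.inr (Or.inl ⟨rfl, hav ▸ hab⟩))⟩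
      · by_cases hbv : b = v
        · by_cases hau : a = u
          · left
            simp only [dif_pos hbv, dif_neg hav]
            exact Subtype.ext (Subtype.ext hau)
          · right
            simp only [SimpleGraph.comap_adj, Function.Embedding.coe_subtype,
              dif_pos hbv, dif_neg hav]
            rw [contractGraph, SimpleGraph.fromRel_adj]
            exact ⟨fun h => hau (congrArg Subtype.val h),
              Or.inl (Or.inr (Or.inr ⟨rfl, hbv ▸ hab.symm⟩))⟩
        · right
          simp only [SimpleGraph.comap_adj, Function.Embedding.coe_subtype,
            dif_neg hav, dif_neg hbv]
          rw [contractGraph, SimpleGraph.fromRel_adj]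
          exact ⟨fun h => hab.ne (congrArg Subtype.val h), Or.inl (Or.inl hab)⟩
end

section
/- Let G be a 2-connected graph and uv an edge of G such that u and v have a common neighbor. If the edge-switching graph G[v→u] is not 2-connected, then {u, v} is a vertex cut of G. -/
/-- The edge-switching graph `G[v → u]`: every edge `vx` with
`x ∈ N(v) \ N[u]` is replaced by the edge `ux`. -/
def switchGraph {V : Type*} (G : SimpleGraph V) (u v : V) : SimpleGraph V :=
  SimpleGraph.fromRel fun a b =>
    (G.Adj a b ∧ ¬ (a = v ∧ G.Adj v b ∧ ¬ G.Adj u b ∧ b ≠ u)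
              ∧ ¬ (b = v ∧ G.Adj v a ∧ ¬ G.Adj u a ∧ a ≠ u))
    ∨ (a = u ∧ G.Adj v b ∧ ¬ G.Adj u b ∧ b ≠ u)
    ∨ (b = u ∧ G.Adj v a ∧ ¬ G.Adj u a ∧ a ≠ u)

private lemma reach_lift {V W : Type*} {G : SimpleGraph V} {H : SimpleGraph W} (f : V → W)
    (h : ∀ x y, G.Adj x y → H.Reachable (f x) (f y)) {a b : V}
    (hab : G.Reachable a b) : H.Reachable (f a) (f b) := by
  obtain ⟨p⟩ := hab
  induction p with
  | nil => exact SimpleGraph.Reachable.refl _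
  | cons ha _ ih => exact (h _ _ ha).trans ih

theorem stmt_7 {V : Type*} (G : SimpleGraph V) (u v : V)
    (h2c : TwoConnected G) (huv : G.Adj u v)
    (hcn : ∃ w : V, G.Adj u w ∧ G.Adj v w)
    (hnot : ¬ TwoConnected (switchGraph G u v)) :
    IsCutPair G u v := by
  classical
  set G' := switchGraph G u v with hG'
  have hne : u ≠ v := huv.ne
  have hkeep : ∀ a b : V, a ≠ v → b ≠ v → G.Adj a b → G'.Adj a b := by
    intro a b ha hb hab
    exact ⟨hab.ne, Or.inl (Or.inl ⟨hab, fun h => ha h.1, fun h => hb h.1⟩)⟩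
  have huv' : G'.Adj u v :=
    ⟨hne, Or.inl (Or.inl ⟨huv, fun h => hne h.1, fun h => h.2.2.2 rfl⟩)⟩
  have hub' : ∀ b : V, G.Adj v b → b ≠ u → G'.Adj u b := by
    intro b hvb hbu
    by_cases hub : G.Adj u b
    · exact hkeep u b hne (Ne.symm hvb.ne) hub
    · exact ⟨Ne.symm hbu, Or.inl (Or.inr (Or.inl ⟨rfl, hvb, hub, hbu⟩))⟩
  have hvkept : ∀ b : V, G.Adj v b → (G.Adj u b ∨ b = u) → G'.Adj v b := by
    intro b hvb h
    refine ⟨hvb.ne, Or.inl (Or.inl ⟨hvb, ?_, ?_⟩)⟩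
    · rintro ⟨-, -, hnub, hbu⟩
      rcases h with h | h
      · exact hnub h
      · exact hbu h
    · rintro ⟨hb, -⟩
      exact hvb.ne hb.symm
  -- extract a bad vertex x for G'
  have hcard : (3 : ℕ) ≤ Nat.card V := h2c.1
  have hx : ∃ x : V, ¬ (G'.induce {w : V | w ≠ x}).Connected := by
    by_contra hc
    push_neg at hc
    exact hnot ⟨hcard, hc⟩
  obtain ⟨x, hx⟩ := hx
  rcases eq_or_ne x v with h | hxv
  · -- x = v : G' - v contains G - v, contradiction
    exfalso
    rw [h] at hx
    apply hx
    have hGc := h2c.2 v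
    haveI : Nonempty ↑{w : V | w ≠ v} := hGc.nonempty
    refine ⟨fun a b => ?_⟩
    refine reach_lift (G := G.induce {w : V | w ≠ v}) (f := id) ?_ (hGc.preconnected a b)
    intro p q hpq
    have : G'.Adj ↑p ↑q := hkeep _ _ p.2 q.2 hpq
    exact (SimpleGraph.Adj.reachable (by exact this : (G'.induce {w : V | w ≠ v}).Adj p q))
  rcases eq_or_ne x u with h | hxu
  · -- x = u : the main case
    intro hT
    rw [h] at hx
    apply hx
    obtain ⟨w, huw, hvw⟩ := hcn
    have hwu : w ≠ u := huw.ne'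
    have hwv : w ≠ v := hvw.ne'
    have key : ∀ a : V, ∀ ha : a ≠ u,
        (G'.induce {w : V | w ≠ u}).Reachable ⟨a, ha⟩ ⟨v, Ne.symm hne⟩ := by
      intro a ha
      by_cases hav : a = v
      · subst a; exact SimpleGraph.Reachable.refl _
      · have hr : (G.induce {y : V | y ≠ u ∧ y ≠ v}).Reachable ⟨a, ⟨ha, hav⟩⟩ ⟨w, ⟨hwu, hwv⟩⟩ :=
          hT.preconnected _ _
        have lifted := reach_lift
          (G := G.induce {y : V | y ≠ u ∧ y ≠ v}) (H := G'.induce {w : V | w ≠ u})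
          (f := fun p => ⟨p.1, p.2.1⟩) ?_ hr
        · refine lifted.trans (SimpleGraph.Adj.reachable ?_)
          exact (hvkept w hvw (Or.inl huw)).symm
        · intro p q hpq
          exact SimpleGraph.Adj.reachable
            (by exact hkeep _ _ p.2.2 q.2.2 hpq :
              (G'.induce {w : V | w ≠ u}).Adj ⟨p.1, p.2.1⟩ ⟨q.1, q.2.1⟩)
    haveI : Nonempty ↑{w : V | w ≠ u} := ⟨⟨v, Ne.symm hne⟩⟩
    refine ⟨fun a b => ?_⟩
    exact (key a a.2).trans (key b b.2).symm
  · -- x ∉ {u, v} : G' - x still connected, contradiction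
    exfalso
    apply hx
    have hGc := h2c.2 x
    have hreach : ∀ a b : V, ∀ ha : a ≠ x, ∀ hb : b ≠ x, G.Adj a b →
        (G'.induce {w : V | w ≠ x}).Reachable ⟨a, ha⟩ ⟨b, hb⟩ := by
      intro a b ha hb hab
      by_cases hav : a = v
      · subst a
        have hbv : b ≠ v := Ne.symm hab.ne
        by_cases h : G.Adj u b ∨ b = u
        · exact SimpleGraph.Adj.reachable
            (by exact hvkept b hab h : (G'.induce {w : V | w ≠ x}).Adj ⟨v, ha⟩ ⟨b, hb⟩)
        · push_neg at h
          have h1 : (G'.induce {w : V | w ≠ x}).Adj ⟨v, ha⟩ ⟨u, Ne.symm hxu⟩ := huv'.symm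
          have h2 : (G'.induce {w : V | w ≠ x}).Adj ⟨u, Ne.symm hxu⟩ ⟨b, hb⟩ :=
            hub' b hab h.2
          exact (SimpleGraph.Adj.reachable h1).trans (SimpleGraph.Adj.reachable h2)
      · by_cases hbv : b = v
        · subst b
          by_cases h : G.Adj u a ∨ a = u
          · exact SimpleGraph.Adj.reachable
              ((by exact hvkept a hab.symm h :
                (G'.induce {w : V | w ≠ x}).Adj ⟨v, hb⟩ ⟨a, ha⟩).symm)
          · push_neg at h
            have h1 : (G'.induce {w : V | w ≠ x}).Adj ⟨a, ha⟩ ⟨u, Ne.symm hxu⟩ :=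
              (hub' a hab.symm h.2).symm
            have h2 : (G'.induce {w : V | w ≠ x}).Adj ⟨u, Ne.symm hxu⟩ ⟨v, hb⟩ := huv'
            exact (SimpleGraph.Adj.reachable h1).trans (SimpleGraph.Adj.reachable h2)
        · exact SimpleGraph.Adj.reachable
            (by exact hkeep _ _ hav hbv hab : (G'.induce {w : V | w ≠ x}).Adj ⟨a, ha⟩ ⟨b, hb⟩)
    haveI : Nonempty ↑{w : V | w ≠ x} := hGc.nonempty
    refine ⟨fun a b => ?_⟩
    have := reach_lift (G := G.induce {w : V | w ≠ x}) (H := G'.induce {w : V | w ≠ x})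
      (f := id) (fun p q hpq => hreach p q p.2 q.2 hpq) (hGc.preconnected a b)
    simpa using this
end

section
/- Let G be a connected graph, uv an edge of G, and ux any edge incident to u. If every cycle of G containing the edge ux has length at most k, then every cycle of the edge-switching graph G[v→u] containing the edge ux has length at most k. -/
open SimpleGraph Walk

section Aux

variable {V : Type*} {G : SimpleGraph V} {u v : V}

private lemma sw_adj_of_ne {a b : V} (ha : a ≠ u) (hb : b ≠ u)
    (h : (switchGraph G u v).Adj a b) : G.Adj a b := by
  have hs : G.Adj b a → G.Adj a b := fun h => h.symm
  rw [switchGraph, SimpleGraph.fromRel_adj] at h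
  tauto

private lemma sw_adj_u {b : V} (h : (switchGraph G u v).Adj u b) :
    G.Adj u b ∨ (G.Adj v b ∧ ¬ G.Adj u b ∧ b ≠ u) := by
  have hs : G.Adj b u → G.Adj u b := fun h => h.symm
  have hne : u ≠ b := h.ne
  rw [switchGraph, SimpleGraph.fromRel_adj] at h
  tauto

private lemma sw_adj_v {b : V} (huv : G.Adj u v) (hb : b ≠ u)
    (h : (switchGraph G u v).Adj v b) : G.Adj u b := by
  have hs : G.Adj b v → G.Adj v b := fun h => h.symm
  have hvu : v ≠ u := huv.ne'
  have hirr : ¬ G.Adj v v := G.irrefl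
  rw [switchGraph, SimpleGraph.fromRel_adj] at h
  tauto

private lemma myIsCycle_reverse {a : V} {p : G.Walk a a} (h : p.IsCycle) :
    p.reverse.IsCycle := by
  obtain ⟨b, hadj, q, rfl⟩ := Walk.not_nil_iff.mp h.not_nil
  rw [Walk.cons_isCycle_iff] at h
  obtain ⟨hq, he⟩ := h
  rw [Walk.reverse_cons, Walk.isCycle_def]
  refine ⟨?_, ?_, ?_⟩
  · rw [Walk.isTrail_def]
    simp only [Walk.edges_append, Walk.edges_reverse, Walk.edges_cons, Walk.edges_nil]
    rw [List.nodup_append']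
    refine ⟨(List.nodup_reverse.mpr hq.edges_nodup), List.nodup_singleton _, ?_⟩
    intro e he1 he2
    simp only [List.mem_singleton] at he2
    rw [List.mem_reverse] at he1
    subst he2
    exact he (by rwa [Sym2.eq_swap] at he1)
  · intro hnil
    have := congrArg Walk.length hnil
    simp [Walk.length_append] at this
  · have hL : q.support = q.support.dropLast ++ [a] := by
      conv_lhs => rw [← List.dropLast_append_getLast (l := q.support) (by simp)]
      rw [Walk.getLast_support]
    rw [Walk.support_append]
    simp only [Walk.support_cons, Walk.support_nil, List.tail_cons]
    rw [Walk.support_reverse]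
    rw [List.tail_append_of_ne_nil (by simp)]
    have htail : q.support.reverse.tail = q.support.dropLast.reverse := by
      conv_lhs => rw [hL]
      simp
    rw [htail]
    have hperm : (q.support.dropLast.reverse ++ [a]).Perm q.support := by
      conv_rhs => rw [hL]
      exact (List.reverse_perm _).append_right [a]
    exact hperm.nodup_iff.mpr hq.support_nodup

private lemma myFirstEdge {t x w : V} (r : G.Walk w t) (hr : r.IsPath)
    (hx : s(w, x) ∈ r.edges) : ∃ (h : G.Adj w x) (r2 : G.Walk x t), r = Walk.cons h r2 := by
  cases r with
  | nil => simp at hx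
  | @cons _ z _ h' r2 =>
    rw [Walk.edges_cons, List.mem_cons] at hx
    rw [Walk.cons_isPath_iff] at hr
    rcases hx with hx | hx
    · obtain rfl : x = z := Sym2.congr_right.mp hx
      exact ⟨h', r2, rfl⟩
    · exact absurd (r2.fst_mem_support_of_mem_edges hx) hr.2

private lemma sw_helper {x : V} {k : ℕ}
    (huv : G.Adj u v) (hux : G.Adj u x)
    (hG : ∀ (a : V) (w : G.Walk a a), w.IsCycle → s(u, x) ∈ w.edges → w.length ≤ k)
    (h : (switchGraph G u v).Adj u x) (p : (switchGraph G u v).Walk x u)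
    (hc : (Walk.cons h p).IsCycle) : p.length + 1 ≤ k := by
  classical
  rw [Walk.cons_isCycle_iff] at hc
  obtain ⟨hp, hne⟩ := hc
  have hxu : x ≠ u := fun heq => G.irrefl (heq ▸ hux)
  obtain ⟨y, h1, r, hre⟩ := Walk.exists_eq_cons_of_ne (Ne.symm hxu) p.reverse
  have hpe : p = r.reverse.append (Walk.cons h1.symm Walk.nil) := by
    have := congrArg Walk.reverse hre
    rwa [Walk.reverse_reverse, Walk.reverse_cons] at this
  subst hpe
  set q := r.reverse with hqdef
  have hsup : (q.append (Walk.cons h1.symm Walk.nil)).support = q.support ++ [u] := by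
    rw [Walk.support_append]; simp
  have hnodup : (q.support ++ [u]).Nodup := by
    rw [← hsup]; exact hp.support_nodup
  have hqn : q.support.Nodup := (List.nodup_append'.mp hnodup).1
  have hu_not : u ∉ q.support := fun hmem =>
    (List.nodup_append'.mp hnodup).2.2 hmem (by simp)
  have hedges : (q.append (Walk.cons h1.symm Walk.nil)).edges = q.edges ++ [s(y, u)] := by
    rw [Walk.edges_append]; simp
  rw [hedges] at hne
  have hqe_not_u : ∀ z, s(u, z) ∉ q.edges := fun z hmem =>
    hu_not (q.fst_mem_support_of_mem_edges hmem)
  have hGedges : ∀ e ∈ q.edges, e ∈ G.edgeSet := by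
    intro e hemem
    induction e using Sym2.ind with
    | _ a b =>
      have ha : a ≠ u := fun heq => hu_not (heq ▸ q.fst_mem_support_of_mem_edges hemem)
      have hb : b ≠ u := fun heq => hu_not (heq ▸ q.snd_mem_support_of_mem_edges hemem)
      exact sw_adj_of_ne ha hb (q.adj_of_mem_edges hemem)
  have hlen : (q.append (Walk.cons h1.symm Walk.nil)).length = q.length + 1 := by
    simp [Walk.length_append]
  rw [hlen]
  have hyu_ne : y ≠ u := h1.ne'
  rcases sw_adj_u h1 with hyu | ⟨hvy, hnuy, _⟩
  · -- all of c is a cycle in G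
    set cG : G.Walk u u := Walk.cons hux ((q.transfer G hGedges).concat hyu.symm) with hcG
    have hcyc : cG.IsCycle := by
      rw [hcG, Walk.cons_isCycle_iff]
      constructor
      · rw [Walk.isPath_def, Walk.support_concat, Walk.support_transfer]
        exact hnodup
      · rw [Walk.edges_concat, Walk.edges_transfer, List.concat_eq_append]
        exact hne
    have := hG u cG hcyc (by rw [hcG, Walk.edges_cons]; exact List.mem_cons_self)
    rw [hcG] at this
    simp only [Walk.length_cons, Walk.length_concat, Walk.length_transfer] at this
    omega
  · by_cases hvq : v ∈ q.support
    · -- v lies on the path q: reroute through the new edge's origin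
      set q1 := q.takeUntil v hvq with hq1
      set q2 := q.dropUntil v hvq with hq2d
      have hqspec : q1.append q2 = q := q.take_spec hvq
      obtain ⟨b, hvb, q2c, hq2⟩ := Walk.exists_eq_cons_of_ne hvy.ne q2
      have hsupq : q.support = q1.support ++ q2c.support := by
        conv_lhs => rw [← hqspec]
        rw [Walk.support_append, hq2, Walk.support_cons, List.tail_cons]
      have hnodup2 : ((q1.support ++ q2c.support) ++ [u]).Nodup := by
        rw [← hsupq]; exact hnodup
      have hu1 : u ∉ q1.support := fun hm => hu_not (hsupq ▸ List.mem_append_left _ hm)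
      have hu2 : u ∉ q2c.support := fun hm => hu_not (hsupq ▸ List.mem_append_right _ hm)
      have hb2 : b ∈ q2c.support := q2c.start_mem_support
      have hbu : b ≠ u := fun heq => hu2 (heq ▸ hb2)
      have hub : G.Adj u b := sw_adj_v huv hbu hvb
      have hx1 : x ∈ q1.support := q1.start_mem_support
      have hbx : b ≠ x := by
        intro heq
        subst heq
        have hdisj := (List.nodup_append'.mp ((hsupq ▸ hqn) : (q1.support ++ q2c.support).Nodup)).2.2
        exact hdisj hx1 hb2
      have hq1E : ∀ e ∈ q1.edges, e ∈ G.edgeSet := fun e he =>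
        hGedges e (q.edges_takeUntil_subset hvq he)
      have hq2E : ∀ e ∈ q2c.edges, e ∈ G.edgeSet := by
        intro e he
        apply hGedges
        apply q.edges_dropUntil_subset hvq
        rw [← hq2d, hq2, Walk.edges_cons]
        exact List.mem_cons_of_mem _ he
      set cG : G.Walk u u := Walk.cons hux ((q1.transfer G hq1E).append
        (Walk.cons hvy (((q2c.transfer G hq2E).reverse).concat hub.symm))) with hcG
      have hsupcG : ((q1.transfer G hq1E).append
          (Walk.cons hvy (((q2c.transfer G hq2E).reverse).concat hub.symm))).support
          = q1.support ++ (q2c.support.reverse ++ [u]) := by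
        rw [Walk.support_append, Walk.support_cons, List.tail_cons, Walk.support_concat,
          Walk.support_reverse, Walk.support_transfer, Walk.support_transfer]
      have hedgcG : ((q1.transfer G hq1E).append
          (Walk.cons hvy (((q2c.transfer G hq2E).reverse).concat hub.symm))).edges
          = q1.edges ++ (s(v, y) :: (q2c.edges.reverse ++ [s(b, u)])) := by
        rw [Walk.edges_append, Walk.edges_cons, Walk.edges_concat, Walk.edges_reverse,
          Walk.edges_transfer, Walk.edges_transfer, List.concat_eq_append]
      have hcyc : cG.IsCycle := by
        rw [hcG, Walk.cons_isCycle_iff]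
        constructor
        · rw [Walk.isPath_def, hsupcG]
          have hperm : (q1.support ++ (q2c.support.reverse ++ [u])).Perm
              ((q1.support ++ q2c.support) ++ [u]) := by
            rw [List.append_assoc]
            exact List.Perm.append_left _ (List.Perm.append_right [u] (List.reverse_perm _))
          exact hperm.nodup_iff.mpr hnodup2
        · rw [hedgcG]
          intro hm
          rcases List.mem_append.mp hm with hm | hm
          · exact hqe_not_u x (q.edges_takeUntil_subset hvq hm)
          · rcases List.mem_cons.mp hm with hm | hm
            · rcases Sym2.eq_iff.mp hm with ⟨h1', _⟩ | ⟨h1', _⟩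
              · exact huv.ne' h1'.symm
              · exact hyu_ne h1'.symm
            · rcases List.mem_append.mp hm with hm | hm
              · rw [List.mem_reverse] at hm
                apply hqe_not_u x
                apply q.edges_dropUntil_subset hvq
                rw [← hq2d, hq2, Walk.edges_cons]
                exact List.mem_cons_of_mem _ hm
              · rw [List.mem_singleton] at hm
                rcases Sym2.eq_iff.mp hm with ⟨h1', h2'⟩ | ⟨h1', h2'⟩
                · exact hxu h2'
                · exact hbx h2'.symm
      have hlencG := hG u cG hcyc (by rw [hcG, Walk.edges_cons]; exact List.mem_cons_self)
      have hqlen : q.length = q1.length + q2c.length + 1 := by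
        conv_lhs => rw [← hqspec]
        rw [Walk.length_append, hq2, Walk.length_cons]
        omega
      rw [hcG] at hlencG
      simp only [Walk.length_cons, Walk.length_append, Walk.length_concat,
        Walk.length_reverse, Walk.length_transfer] at hlencG
      omega
    · -- v is not on q: extend the cycle through v
      set cG : G.Walk u u := Walk.cons hux
        (((q.transfer G hGedges).concat hvy.symm).concat huv.symm) with hcG
      have hcyc : cG.IsCycle := by
        rw [hcG, Walk.cons_isCycle_iff]
        constructor
        · rw [Walk.isPath_def, Walk.support_concat, Walk.support_concat,
            Walk.support_transfer]
          rw [List.nodup_append']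
          refine ⟨?_, List.nodup_singleton _, ?_⟩
          · rw [List.nodup_append']
            refine ⟨hqn, List.nodup_singleton _, ?_⟩
            intro a ha hb
            rw [List.mem_singleton] at hb
            subst hb
            exact hvq ha
          · intro a ha hb
            rw [List.mem_singleton] at hb
            subst hb
            rcases List.mem_append.mp ha with ha | ha
            · exact hu_not ha
            · exact huv.ne' (List.mem_singleton.mp ha).symm
        · rw [Walk.edges_concat, Walk.edges_concat, Walk.edges_transfer,
            List.concat_eq_append, List.concat_eq_append]
          intro hm
          rcases List.mem_append.mp hm with hm | hm
          · rcases List.mem_append.mp hm with hm | hm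
            · exact hqe_not_u x hm
            · rw [List.mem_singleton] at hm
              rcases Sym2.eq_iff.mp hm with ⟨h1', _⟩ | ⟨h1', _⟩
              · exact hyu_ne h1'.symm
              · exact huv.ne' h1'.symm
          · rw [List.mem_singleton] at hm
            rcases Sym2.eq_iff.mp hm with ⟨h1', h2'⟩ | ⟨h1', h2'⟩
            · exact hxu h2'
            · subst h2'
              exact hvq q.start_mem_support
      have hlencG := hG u cG hcyc (by rw [hcG, Walk.edges_cons]; exact List.mem_cons_self)
      rw [hcG] at hlencG
      simp only [Walk.length_cons, Walk.length_concat, Walk.length_transfer] at hlencG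
      omega

end Aux

theorem stmt_8 {V : Type*} (G : SimpleGraph V) (u v x : V) (k : ℕ)
    (hconn : G.Connected) (huv : G.Adj u v) (hux : G.Adj u x)
    (hG : ∀ (a : V) (w : G.Walk a a), w.IsCycle → s(u, x) ∈ w.edges → w.length ≤ k) :
    ∀ (a : V) (w : (switchGraph G u v).Walk a a),
      w.IsCycle → s(u, x) ∈ w.edges → w.length ≤ k := by
  classical
  have key : ∀ (c : (switchGraph G u v).Walk u u),
      c.IsCycle → s(u, x) ∈ c.edges → c.length ≤ k := by
    intro c hc hm
    obtain ⟨w1, h', p', rfl⟩ := Walk.not_nil_iff.mp hc.not_nil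
    rw [Walk.edges_cons, List.mem_cons] at hm
    rcases hm with hm | hm
    · obtain rfl : x = w1 := Sym2.congr_right.mp hm
      have := sw_helper huv hux hG h' p' hc
      rw [Walk.length_cons]
      omega
    · have hp' : p'.IsPath := ((Walk.cons_isCycle_iff _ _).mp hc).1
      have hm' : s(u, x) ∈ p'.reverse.edges := by
        rw [Walk.edges_reverse, List.mem_reverse]; exact hm
      obtain ⟨h2, r2, hr⟩ := myFirstEdge p'.reverse hp'.reverse hm'
      have hcrev : (Walk.cons h' p').reverse.IsCycle := myIsCycle_reverse hc
      rw [Walk.reverse_cons, hr, Walk.cons_append] at hcrev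
      have hlen := sw_helper huv hux hG h2 (r2.append (Walk.cons h'.symm Walk.nil)) hcrev
      have hplen : p'.length = r2.length + 1 := by
        have := congrArg Walk.length hr
        rw [Walk.length_reverse, Walk.length_cons] at this
        omega
      rw [Walk.length_append] at hlen
      rw [Walk.length_cons]
      simp only [Walk.length_cons, Walk.length_nil] at hlen
      omega
  intro a w hcyc hmem
  have hu : u ∈ w.support := w.fst_mem_support_of_mem_edges hmem
  have hrot : (w.rotate u hu).IsCycle := hcyc.rotate hu
  have hmem' : s(u, x) ∈ (w.rotate u hu).edges := by
    exact ((w.rotate_edges u hu).symm.mem_iff).mp hmem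
  have hlen : (w.rotate u hu).length = w.length := by
    rw [← Walk.length_edges, ← Walk.length_edges]
    exact (w.rotate_edges u hu).perm.length_eq
  rw [← hlen]
  exact key _ hrot hmem'
end

section
/- Let G be a connected graph and uv an edge of G such that u and v have no common neighbor. Then for every integer s ≥ 3, the number of s-cliques of the contraction G/uv is at least the number of s-cliques of G, i.e., N_s(G/uv) ≥ N_s(G). -/
theorem stmt_9 {V : Type*} [Fintype V] (G : SimpleGraph V) (u v : V) (s : ℕ)
    (hconn : G.Connected) (huv : G.Adj u v)
    (hcn : ∀ w : V, ¬ (G.Adj u w ∧ G.Adj v w)) (hs : 3 ≤ s) :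
    (G.cliqueSet s).ncard ≤ ((contractGraph G u v).cliqueSet s).ncard := by
  classical
  have hne : u ≠ v := huv.ne
  set f : V → {w : V // w ≠ v} := fun w => if h : w = v then ⟨u, hne⟩ else ⟨w, h⟩ with hfdef
  have fval : ∀ (w : V) (h : w ≠ v), f w = ⟨w, h⟩ := fun w h => dif_neg h
  have fv : f v = ⟨u, hne⟩ := dif_pos rfl
  -- every s-clique has a vertex different from u and v
  have third : ∀ t : Finset V, G.IsNClique s t → ∃ w ∈ t, w ≠ u ∧ w ≠ v := by
    intro t ht
    have hsub : ¬ t ⊆ {u, v} := by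
      intro hsub
      have h1 := Finset.card_le_card hsub
      rw [ht.card_eq, Finset.card_pair hne] at h1
      omega
    obtain ⟨w, hw, hwn⟩ := Finset.not_subset.mp hsub
    simp only [Finset.mem_insert, Finset.mem_singleton, not_or] at hwn
    exact ⟨w, hw, hwn.1, hwn.2⟩
  -- no s-clique contains both u and v
  have hnotboth : ∀ t : Finset V, G.IsNClique s t → ¬ (u ∈ t ∧ v ∈ t) := by
    rintro t ht ⟨hu, hv⟩
    obtain ⟨w, hw, hwu, hwv⟩ := third t ht
    exact hcn w ⟨ht.1 hu hw (Ne.symm hwu), ht.1 hv hw (Ne.symm hwv)⟩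
  -- f is injective on each clique
  have hinj : ∀ t : Finset V, G.IsNClique s t → Set.InjOn f t := by
    intro t ht a ha b hb hab
    by_cases av : a = v <;> by_cases bv : b = v
    · rw [av, bv]
    · rw [av, fv, fval b bv, Subtype.mk.injEq] at hab
      exact absurd ⟨hab ▸ hb, av ▸ ha⟩ (hnotboth t ht)
    · rw [bv, fv, fval a av, Subtype.mk.injEq] at hab
      exact absurd ⟨hab ▸ ha, bv ▸ hb⟩ (hnotboth t ht)
    · rw [fval a av, fval b bv, Subtype.mk.injEq] at hab
      exact hab
  -- key lemma: if images are equal, can't have u in one and v in the other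
  have key : ∀ t₁ t₂ : Finset V, G.IsNClique s t₁ → G.IsNClique s t₂ →
      Finset.image f t₁ = Finset.image f t₂ → u ∈ t₁ → v ∈ t₂ → False := by
    intro t₁ t₂ h₁ h₂ heq hu hv
    obtain ⟨w, hw, hwu, hwv⟩ := third t₂ h₂
    have hadjv : G.Adj v w := h₂.1 hv hw (Ne.symm hwv)
    have hwim : f w ∈ Finset.image f t₁ := by
      rw [heq]; exact Finset.mem_image_of_mem f hw
    obtain ⟨c, hc, hfc⟩ := Finset.mem_image.mp hwim
    have hw1 : w ∈ t₁ := by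
      by_cases cv : c = v
      · rw [cv, fv, fval w hwv, Subtype.mk.injEq] at hfc
        exact absurd hfc (Ne.symm hwu)
      · rw [fval c cv, fval w hwv, Subtype.mk.injEq] at hfc
        rwa [← hfc]
    exact hcn w ⟨h₁.1 hu hw1 (Ne.symm hwu), hadjv⟩
  -- image of a clique is contained in the other clique's preimage: subset lemma
  have hsub : ∀ t₁ t₂ : Finset V, G.IsNClique s t₁ → G.IsNClique s t₂ →
      Finset.image f t₁ = Finset.image f t₂ → t₁ ⊆ t₂ := by
    intro t₁ t₂ h₁ h₂ heq a ha
    have : f a ∈ Finset.image f t₂ := by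
      rw [← heq]; exact Finset.mem_image_of_mem f ha
    obtain ⟨b, hb, hfb⟩ := Finset.mem_image.mp this
    by_cases av : a = v <;> by_cases bv : b = v
    · rwa [av, ← bv]
    · -- a = v, b ≠ v : then b = u, so u ∈ t₂ and v ∈ t₁ : contradiction via key
      rw [av, fv, fval b bv, Subtype.mk.injEq] at hfb
      have hbu : b = u := hfb
      exact absurd (key t₂ t₁ h₂ h₁ heq.symm (hbu ▸ hb) (av ▸ ha)) (not_false)
    · -- a ≠ v, b = v : then a = u, so u ∈ t₁ and v ∈ t₂ : contradiction via key
      rw [bv, fv, fval a av, Subtype.mk.injEq] at hfb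
      have hau : a = u := hfb.symm
      exact absurd (key t₁ t₂ h₁ h₂ heq (hau ▸ ha) (bv ▸ hb)) (not_false)
    · rw [fval a av, fval b bv, Subtype.mk.injEq] at hfb
      exact hfb ▸ hb
  apply Set.ncard_le_ncard_of_injOn (fun t => Finset.image f t)
  · -- maps cliques to cliques
    intro t ht
    rw [SimpleGraph.mem_cliqueSet_iff] at ht ⊢
    constructor
    · -- IsClique
      intro x hx y hy hxy
      obtain ⟨a, ha, rfl⟩ := Finset.mem_image.mp (Finset.mem_coe.mp hx)
      obtain ⟨b, hb, rfl⟩ := Finset.mem_image.mp (Finset.mem_coe.mp hy)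
      have hab : a ≠ b := fun h => hxy (h ▸ rfl)
      have hadj : G.Adj a b := ht.1 ha hb hab
      rw [contractGraph, SimpleGraph.fromRel_adj]
      refine ⟨hxy, ?_⟩
      by_cases av : a = v <;> by_cases bv : b = v
      · exact absurd (av.trans bv.symm) hab
      · subst av
        rw [fv, fval b bv]
        exact Or.inl (Or.inr (Or.inl ⟨rfl, hadj⟩))
      · subst bv
        rw [fv, fval a av]
        exact Or.inl (Or.inr (Or.inr ⟨rfl, hadj.symm⟩))
      · rw [fval a av, fval b bv]
        exact Or.inl (Or.inl hadj)
    · -- card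
      rw [Finset.card_image_of_injOn (hinj t ht), ht.card_eq]
  · -- injective on cliqueSet
    intro t₁ h₁ t₂ h₂ heq
    rw [SimpleGraph.mem_cliqueSet_iff] at h₁ h₂
    exact Finset.Subset.antisymm (hsub t₁ t₂ h₁ h₂ heq) (hsub t₂ t₁ h₂ h₁ heq.symm)
end

section
/- Let G be a graph and uv an edge of G. Then for every integer s ≥ 2, the number of s-cliques of the edge-switching graph G[v→u] is at least the number of s-cliques of G, i.e., N_s(G[v→u]) ≥ N_s(G). -/
theorem stmt_10 {V : Type*} [Fintype V] (G : SimpleGraph V) (u v : V) (s : ℕ)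
    (huv : G.Adj u v) (hs : 2 ≤ s) :
    (G.cliqueSet s).ncard ≤ ((switchGraph G u v).cliqueSet s).ncard := by
  classical
  set G' := switchGraph G u v with hG'
  have hne_uv : u ≠ v := huv.ne
  have hrel : ∀ a b : V, G'.Adj a b ↔ a ≠ b ∧
      (((G.Adj a b ∧ ¬ (a = v ∧ G.Adj v b ∧ ¬ G.Adj u b ∧ b ≠ u)
              ∧ ¬ (b = v ∧ G.Adj v a ∧ ¬ G.Adj u a ∧ a ≠ u))
        ∨ (a = u ∧ G.Adj v b ∧ ¬ G.Adj u b ∧ b ≠ u)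
        ∨ (b = u ∧ G.Adj v a ∧ ¬ G.Adj u a ∧ a ≠ u)) ∨
       ((G.Adj b a ∧ ¬ (b = v ∧ G.Adj v a ∧ ¬ G.Adj u a ∧ a ≠ u)
              ∧ ¬ (a = v ∧ G.Adj v b ∧ ¬ G.Adj u b ∧ b ≠ u))
        ∨ (b = u ∧ G.Adj v a ∧ ¬ G.Adj u a ∧ a ≠ u)
        ∨ (a = u ∧ G.Adj v b ∧ ¬ G.Adj u b ∧ b ≠ u))) := by
    intro a b
    rw [hG', switchGraph, SimpleGraph.fromRel_adj]
  -- key dichotomy for cliques of G that are not cliques of G'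
  have key : ∀ S : Finset V, G.IsNClique s S → ¬ G'.IsNClique s S →
      v ∈ S ∧ u ∉ S ∧ ∃ x ∈ S, G.Adj v x ∧ ¬ G.Adj u x ∧ x ≠ u := by
    intro S hS hS'
    have hcard := hS.2
    have hclique := hS.1
    have hnc : ¬ G'.IsClique S := fun h => hS' ⟨h, hcard⟩
    rw [SimpleGraph.isClique_iff, Set.Pairwise] at hnc
    push_neg at hnc
    obtain ⟨a, ha, b, hb, hab, hnadj⟩ := hnc
    have haS : a ∈ S := ha
    have hbS : b ∈ S := hb
    have hGab : G.Adj a b := hclique ha hb hab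
    have hcases : (a = v ∧ G.Adj v b ∧ ¬ G.Adj u b ∧ b ≠ u)
        ∨ (b = v ∧ G.Adj v a ∧ ¬ G.Adj u a ∧ a ≠ u) := by
      by_contra hc
      rw [not_or] at hc
      exact hnadj ((hrel a b).mpr ⟨hab, Or.inl (Or.inl ⟨hGab, hc.1, hc.2⟩)⟩)
    have main : v ∈ S ∧ ∃ x ∈ S, G.Adj v x ∧ ¬ G.Adj u x ∧ x ≠ u := by
      rcases hcases with ⟨rfl, hb1, hb2, hb3⟩ | ⟨rfl, hb1, hb2, hb3⟩
      · exact ⟨haS, b, hbS, hb1, hb2, hb3⟩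
      · exact ⟨hbS, a, haS, hb1, hb2, hb3⟩
    obtain ⟨hvS, x, hxS, hx1, hx2, hx3⟩ := main
    refine ⟨hvS, ?_, x, hxS, hx1, hx2, hx3⟩
    intro huS
    exact hx2 (hclique huS hxS (Ne.symm hx3))
  -- the compression map
  set f : Finset V → Finset V :=
    fun S => if G'.IsNClique s S then S else insert u (S.erase v) with hf
  -- any clique stays a clique
  have hstep : ∀ S : Finset V, G.IsNClique s S → v ∈ S → u ∉ S →
      ∀ b ∈ S, b ≠ v → G'.Adj u b := by
    intro S hS hvS huS b hbS hbv
    have hbu : b ≠ u := fun h => huS (h ▸ hbS)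
    have hvb : G.Adj v b := hS.1 hvS hbS (Ne.symm hbv)
    by_cases hub : G.Adj u b
    · rw [hrel]
      exact ⟨Ne.symm hbu, Or.inl (Or.inl ⟨hub,
        fun h => hne_uv h.1, fun h => hbv h.1⟩)⟩
    · rw [hrel]
      exact ⟨Ne.symm hbu, Or.inl (Or.inr (Or.inl ⟨rfl, hvb, hub, hbu⟩))⟩
  have hmaps : ∀ S : Finset V, G.IsNClique s S → G'.IsNClique s (f S) := by
    intro S hS
    rw [hf]
    by_cases h : G'.IsNClique s S
    · simp [h]
    · simp only [h, if_false]
      obtain ⟨hvS, huS, x, hxS, hx1, hx2, hx3⟩ := key S hS h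
      constructor
      · intro a ha b hb hab
        simp only [Finset.coe_insert, Set.mem_insert_iff, Finset.coe_erase,
          Set.mem_diff, Finset.mem_coe, Set.mem_singleton_iff] at ha hb
        rcases ha with rfl | ⟨haS, hav⟩
        · rcases hb with rfl | ⟨hbS, hbv⟩
          · exact absurd rfl hab
          · exact hstep S hS hvS huS b hbS hbv
        · rcases hb with rfl | ⟨hbS, hbv⟩
          · exact (hstep S hS hvS huS a haS hav).symm
          · have hGab : G.Adj a b := hS.1 haS hbS hab
            rw [hrel]
            exact ⟨hab, Or.inl (Or.inl ⟨hGab,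
              fun h => hav h.1, fun h => hbv h.1⟩)⟩
      · have huE : u ∉ S.erase v := fun h => huS (Finset.mem_of_mem_erase h)
        rw [Finset.card_insert_of_notMem huE, Finset.card_erase_of_mem hvS,
          hS.2]
        omega
  -- injectivity
  have hinj : Set.InjOn f (G.cliqueSet s) := by
    intro S1 hS1 S2 hS2 heq
    rw [SimpleGraph.mem_cliqueSet_iff] at hS1 hS2
    rw [hf] at heq
    simp only at heq
    by_cases h1 : G'.IsNClique s S1 <;> by_cases h2 : G'.IsNClique s S2
    · simpa [h1, h2] using heq
    · exfalso
      simp only [h1, h2, if_true, if_false] at heq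
      obtain ⟨hvS, huS, x, hxS, hx1, hx2, hx3⟩ := key S2 hS2 h2
      have hxS1 : x ∈ S1 := by
        rw [heq]
        exact Finset.mem_insert_of_mem (Finset.mem_erase.mpr ⟨hx1.ne', hxS⟩)
      have huS1 : u ∈ S1 := by rw [heq]; exact Finset.mem_insert_self _ _
      exact hx2 (hS1.1 huS1 hxS1 (Ne.symm hx3))
    · exfalso
      simp only [h1, h2, if_true, if_false] at heq
      obtain ⟨hvS, huS, x, hxS, hx1, hx2, hx3⟩ := key S1 hS1 h1
      have hxS2 : x ∈ S2 := by
        rw [← heq]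
        exact Finset.mem_insert_of_mem (Finset.mem_erase.mpr ⟨hx1.ne', hxS⟩)
      have huS2 : u ∈ S2 := by rw [← heq]; exact Finset.mem_insert_self _ _
      exact hx2 (hS2.1 huS2 hxS2 (Ne.symm hx3))
    · simp only [h1, h2, if_false] at heq
      obtain ⟨hv1, hu1, -⟩ := key S1 hS1 h1
      obtain ⟨hv2, hu2, -⟩ := key S2 hS2 h2
      have he : S1.erase v = S2.erase v := by
        have h1 : u ∉ S1.erase v := fun h => hu1 (Finset.mem_of_mem_erase h)
        have h2 : u ∉ S2.erase v := fun h => hu2 (Finset.mem_of_mem_erase h)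
        have := congrArg (Finset.erase · u) heq
        simpa [Finset.erase_insert h1, Finset.erase_insert h2] using this
      have := congrArg (insert v) he
      rwa [Finset.insert_erase hv1, Finset.insert_erase hv2] at this
  -- conclude
  apply Set.ncard_le_ncard_of_injOn f
  · intro S hS
    rw [SimpleGraph.mem_cliqueSet_iff] at hS ⊢
    exact hmaps S hS
  · exact hinj
end

section
/- Let G be a connected graph on n ≥ 2 vertices having no cycle of length 4 or more. Then the number of triangles of G is at most (n-1)/2, i.e., N_3(G) ≤ ⌊(n-1)/2⌋. -/
open SimpleGraph

namespace Stmt11Aux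

set_option linter.unusedSectionVars false

variable {V : Type*} [DecidableEq V] {G : SimpleGraph V}




lemma no4 (hcyc : ∀ (a : V) (w : G.Walk a a), w.IsCycle → w.length < 4)
    {a b c d : V} (hab : G.Adj a b) (hbc : G.Adj b c) (hcd : G.Adj c d)
    (hda : G.Adj d a) (hac : a ≠ c) (hbd : b ≠ d) : False := by
  set p : G.Walk b a := Walk.cons hbc (Walk.cons hcd (Walk.cons hda Walk.nil)) with hpdef
  have hp : p.IsPath := by
    rw [hpdef, Walk.isPath_def]
    simp only [Walk.support_cons, Walk.support_nil]
    simp [hbc.ne, hcd.ne, hda.ne, hbd, hab.ne', hac, Ne.symm hac, Ne.symm hbd,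
      hcd.ne', hda.ne', hbc.ne']
  have he : s(a, b) ∉ p.edges := by
    rw [hpdef]
    simp only [Walk.edges_cons, Walk.edges_nil, List.mem_cons, List.not_mem_nil, or_false,
      Sym2.eq_iff]
    rintro ((⟨h1, h2⟩ | ⟨h1, h2⟩) | (⟨h1, h2⟩ | ⟨h1, h2⟩) | (⟨h1, h2⟩ | ⟨h1, h2⟩))
    · exact hab.ne h1
    · exact hac h1
    · exact hac h1
    · exact hbc.ne h2
    · exact hab.ne h2.symm
    · exact hbd h2
  have hC : (Walk.cons hab p).IsCycle := (Walk.cons_isCycle_iff p hab).mpr ⟨hp, he⟩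
  have hlen := hcyc a (Walk.cons hab p) hC
  rw [hpdef] at hlen
  simp [Walk.length_cons] at hlen

lemma dist_adj (hconn : G.Connected) {r u v : V} (h : G.Adj u v) :
    G.dist r v ≤ G.dist r u + 1 := by
  calc G.dist r v ≤ G.dist r u + G.dist u v := hconn.dist_triangle
  _ = G.dist r u + 1 := by rw [dist_eq_one_iff_adj.mpr h]

lemma exists_parent (hconn : G.Connected) {r v : V} (h : G.dist r v ≠ 0) :
    ∃ u, G.Adj u v ∧ G.dist r u + 1 = G.dist r v := by
  obtain ⟨p, hp⟩ := (hconn v r).exists_walk_length_eq_dist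
  cases p with
  | nil =>
    exfalso
    exact h dist_self
  | @cons _ u _ hadj q =>
    refine ⟨u, hadj.symm, ?_⟩
    have h1 : G.dist r u ≤ q.length := by
      rw [dist_comm]; exact SimpleGraph.dist_le q
    have h2 : G.dist r v ≤ G.dist r u + 1 := dist_adj hconn hadj.symm
    have h3 : q.length + 1 = G.dist v r := by simpa using hp
    rw [dist_comm] at h3
    omega

lemma core (hconn : G.Connected) (r : V) :
    ∀ k, ∀ u1 u2 : V, u1 ≠ u2 → G.dist r u1 = k → G.dist r u2 = k →
    ∃ (w : V) (P1 : G.Walk w u1) (P2 : G.Walk w u2),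
      P1.IsPath ∧ P2.IsPath ∧ G.dist r w < k ∧
      (∀ y ∈ P1.support, G.dist r y ≤ k) ∧ (∀ y ∈ P2.support, G.dist r y ≤ k) ∧
      (∀ y, y ∈ P1.support → y ∈ P2.support → y = w) ∧
      P1.length ≠ 0 ∧ P2.length ≠ 0 := by
  intro k
  induction k with
  | zero =>
    intro u1 u2 hne h1 h2
    exact absurd ((hconn.dist_eq_zero_iff.mp h1).symm.trans (hconn.dist_eq_zero_iff.mp h2)) hne
  | succ k ih =>
    intro u1 u2 hne h1 h2
    obtain ⟨q1, hq1, hd1⟩ := exists_parent hconn (r := r) (v := u1) (by omega)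
    obtain ⟨q2, hq2, hd2⟩ := exists_parent hconn (r := r) (v := u2) (by omega)
    have hdq1 : G.dist r q1 = k := by omega
    have hdq2 : G.dist r q2 = k := by omega
    by_cases hq : q1 = q2
    · subst hq
      refine ⟨q1, Walk.cons hq1 Walk.nil, Walk.cons hq2 Walk.nil, ?_, ?_, by omega, ?_, ?_, ?_,
        by simp, by simp⟩
      · simp [Walk.isPath_def, hq1.ne]
      · simp [Walk.isPath_def, hq2.ne]
      · intro y hy
        simp only [Walk.support_cons, Walk.support_nil, List.mem_cons, List.mem_singleton,
          List.not_mem_nil, or_false] at hy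
        rcases hy with h | h <;> rw [h] <;> omega
      · intro y hy
        simp only [Walk.support_cons, Walk.support_nil, List.mem_cons, List.mem_singleton,
          List.not_mem_nil, or_false] at hy
        rcases hy with h | h <;> rw [h] <;> omega
      · intro y hy1 hy2
        simp only [Walk.support_cons, Walk.support_nil, List.mem_cons, List.mem_singleton,
          List.not_mem_nil, or_false] at hy1 hy2
        rcases hy1 with h1' | h1' <;> rcases hy2 with h2' | h2'
        · exact h1'
        · exact h1'
        · exact h2'
        · exact absurd (h1'.symm.trans h2') hne
    · obtain ⟨w, Q1, Q2, hP1, hP2, hw, hb1, hb2, hint, hl1, hl2⟩ := ih q1 q2 hq hdq1 hdq2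
      have hnm1 : u1 ∉ Q1.support := fun hm => by have := hb1 u1 hm; omega
      have hnm2 : u2 ∉ Q2.support := fun hm => by have := hb2 u2 hm; omega
      refine ⟨w, Q1.concat hq1, Q2.concat hq2, ?_, ?_, by omega, ?_, ?_, ?_, ?_, ?_⟩
      · rw [Walk.isPath_def, Walk.support_concat, List.nodup_append]
        refine ⟨hP1.support_nodup, List.nodup_singleton _, ?_⟩
        intro y hy z hy' hyz
        simp only [List.mem_singleton] at hy'
        rw [hyz, hy'] at hy
        exact hnm1 hy
      · rw [Walk.isPath_def, Walk.support_concat, List.nodup_append]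
        refine ⟨hP2.support_nodup, List.nodup_singleton _, ?_⟩
        intro y hy z hy' hyz
        simp only [List.mem_singleton] at hy'
        rw [hyz, hy'] at hy
        exact hnm2 hy
      · intro y hy
        rw [Walk.support_concat, List.mem_append] at hy
        simp only [List.mem_singleton] at hy
        rcases hy with hy | hy
        · have := hb1 y hy; omega
        · rw [hy]; omega
      · intro y hy
        rw [Walk.support_concat, List.mem_append] at hy
        simp only [List.mem_singleton] at hy
        rcases hy with hy | hy
        · have := hb2 y hy; omega
        · rw [hy]; omega
      · intro y hy1 hy2
        rw [Walk.support_concat, List.mem_append] at hy1 hy2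
        simp only [List.mem_singleton] at hy1 hy2
        rcases hy1 with hy1 | hy1
        · rcases hy2 with hy2 | hy2
          · exact hint y hy1 hy2
          · exfalso; rw [hy2] at hy1; have := hb1 u2 hy1; omega
        · rcases hy2 with hy2 | hy2
          · exfalso; rw [hy1] at hy2; have := hb2 u1 hy2; omega
          · exact absurd (hy1.symm.trans hy2) hne
      · rw [Walk.length_concat]; omega
      · rw [Walk.length_concat]; omega

lemma common_low (hconn : G.Connected)
    (hcyc : ∀ (a : V) (w : G.Walk a a), w.IsCycle → w.length < 4) (r : V)
    {u1 u2 : V} (h : G.Adj u1 u2) (e : G.dist r u1 = G.dist r u2) :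
    ∃ w, G.Adj w u1 ∧ G.Adj w u2 ∧ G.dist r w < G.dist r u1 := by
  obtain ⟨w, P1, P2, hP1, hP2, hw, hb1, hb2, hint, hl1, hl2⟩ :=
    core hconn r (G.dist r u1) u1 u2 h.ne rfl e.symm
  have hwtail : w ∉ P2.support.tail := by
    have := hP2.support_nodup
    rw [P2.support_eq_cons] at this
    exact (List.nodup_cons.mp this).1
  set Q : G.Walk u1 u2 := P1.reverse.append P2 with hQdef
  have hQsupp : Q.support = P1.support.reverse ++ P2.support.tail := by
    rw [hQdef, Walk.support_append, Walk.support_reverse]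
  have hQpath : Q.IsPath := by
    rw [Walk.isPath_def, hQsupp, List.nodup_append]
    refine ⟨by simpa using hP1.support_nodup, ?_, ?_⟩
    · have := hP2.support_nodup
      rw [P2.support_eq_cons] at this
      exact (List.nodup_cons.mp this).2
    · intro y hy z hy' hyz
      subst hyz
      have hy1 : y ∈ P1.support := by simpa using hy
      have hy2 : y ∈ P2.support := List.mem_of_mem_tail hy'
      rw [hint y hy1 hy2] at hy'
      exact hwtail hy'
  have hedge : s(u2, u1) ∉ Q.edges := by
    intro hmem
    rw [hQdef, Walk.edges_append, List.mem_append] at hmem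
    rcases hmem with hmem | hmem
    · have h2 : u2 ∈ P1.reverse.support := Walk.fst_mem_support_of_mem_edges _ hmem
      rw [Walk.support_reverse, List.mem_reverse] at h2
      have := hint u2 h2 P2.end_mem_support
      rw [this] at e
      omega
    · have h2 : u1 ∈ P2.support := Walk.snd_mem_support_of_mem_edges _ hmem
      have := hint u1 P1.end_mem_support h2
      rw [this] at hw
      omega
  have hC : (Walk.cons h.symm Q).IsCycle := (Walk.cons_isCycle_iff Q h.symm).mpr ⟨hQpath, hedge⟩
  have hlen := hcyc u2 (Walk.cons h.symm Q) hC
  rw [Walk.length_cons, hQdef, Walk.length_append, Walk.length_reverse] at hlen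
  have e1 : P1.length = 1 := by omega
  have e2 : P2.length = 1 := by omega
  exact ⟨w, Walk.adj_of_length_eq_one e1, Walk.adj_of_length_eq_one e2, hw⟩

lemma unique_parent (hconn : G.Connected)
    (hcyc : ∀ (a : V) (w : G.Walk a a), w.IsCycle → w.length < 4) (r : V)
    {u1 u2 v : V} (h1 : G.Adj u1 v) (h2 : G.Adj u2 v)
    (e : G.dist r u1 = G.dist r u2) (hv : G.dist r v = G.dist r u1 + 1) : u1 = u2 := by
  by_contra hne
  obtain ⟨w, P1, P2, hP1, hP2, hw, hb1, hb2, hint, hl1, hl2⟩ :=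
    core hconn r (G.dist r u1) u1 u2 hne rfl e.symm
  have hwtail : w ∉ P2.support.tail := by
    have := hP2.support_nodup
    rw [P2.support_eq_cons] at this
    exact (List.nodup_cons.mp this).1
  set Q : G.Walk u1 u2 := P1.reverse.append P2 with hQdef
  have hQsupp : Q.support = P1.support.reverse ++ P2.support.tail := by
    rw [hQdef, Walk.support_append, Walk.support_reverse]
  have hQb : ∀ y ∈ Q.support, G.dist r y ≤ G.dist r u1 := by
    intro y hy
    rw [hQsupp, List.mem_append] at hy
    rcases hy with hy | hy
    · exact hb1 y (by simpa using hy)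
    · exact hb2 y (List.mem_of_mem_tail hy)
  have hQpath : Q.IsPath := by
    rw [Walk.isPath_def, hQsupp, List.nodup_append]
    refine ⟨by simpa using hP1.support_nodup, ?_, ?_⟩
    · have := hP2.support_nodup
      rw [P2.support_eq_cons] at this
      exact (List.nodup_cons.mp this).2
    · intro y hy z hy' hyz
      subst hyz
      have hy1 : y ∈ P1.support := by simpa using hy
      have hy2 : y ∈ P2.support := List.mem_of_mem_tail hy'
      rw [hint y hy1 hy2] at hy'
      exact hwtail hy'
  have hvQ : v ∉ Q.support := fun hm => by have := hQb v hm; omega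
  have hRpath : (Q.concat h2).IsPath := by
    rw [Walk.isPath_def, Walk.support_concat, List.nodup_append]
    refine ⟨hQpath.support_nodup, List.nodup_singleton _, ?_⟩
    intro y hy z hy' hyz
    simp only [List.mem_singleton] at hy'
    rw [hyz, hy'] at hy
    exact hvQ hy
  have hedge : s(v, u1) ∉ (Q.concat h2).edges := by
    intro hmem
    rw [Walk.edges_concat, List.concat_eq_append, List.mem_append] at hmem
    rcases hmem with hmem | hmem
    · exact hvQ (Walk.fst_mem_support_of_mem_edges _ hmem)
    · simp only [List.mem_singleton, Sym2.eq_iff] at hmem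
      rcases hmem with ⟨ha, hb⟩ | ⟨ha, hb⟩
      · rw [ha] at hv; omega
      · exact hne hb
  have hC : (Walk.cons h1.symm (Q.concat h2)).IsCycle :=
    (Walk.cons_isCycle_iff _ h1.symm).mpr ⟨hRpath, hedge⟩
  have hlen := hcyc v (Walk.cons h1.symm (Q.concat h2)) hC
  rw [Walk.length_cons, Walk.length_concat, hQdef, Walk.length_append, Walk.length_reverse] at hlen
  omega

lemma no_flat (hconn : G.Connected)
    (hcyc : ∀ (a : V) (w : G.Walk a a), w.IsCycle → w.length < 4) (r : V)
    {a b c : V} (hab : G.Adj a b) (hac : G.Adj a c) (hbc : G.Adj b c)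
    (e : G.dist r a = G.dist r b) (hle : G.dist r a ≤ G.dist r c) : False := by
  obtain ⟨w, hwa, hwb, hw⟩ := common_low hconn hcyc r hab e
  have hwc : w ≠ c := fun h => by rw [h] at hw; omega
  exact no4 hcyc hwa hac hbc.symm hwb.symm hwc hab.ne

lemma tri_min (hconn : G.Connected)
    (hcyc : ∀ (a : V) (w : G.Walk a a), w.IsCycle → w.length < 4) (r : V)
    {a b c : V} (hab : G.Adj a b) (hac : G.Adj a c) (hbc : G.Adj b c)
    (h1 : G.dist r a ≤ G.dist r b) (h2 : G.dist r a ≤ G.dist r c) :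
    G.dist r b = G.dist r a + 1 ∧ G.dist r c = G.dist r a + 1 := by
  have hb' : G.dist r b ≤ G.dist r a + 1 := dist_adj hconn hab
  have hc' : G.dist r c ≤ G.dist r a + 1 := dist_adj hconn hac
  have n1 : G.dist r a ≠ G.dist r b := fun e => no_flat hconn hcyc r hab hac hbc e h2
  have n2 : G.dist r a ≠ G.dist r c := fun e => no_flat hconn hcyc r hac hab hbc.symm e h1
  omega

lemma tri_struct (hconn : G.Connected)
    (hcyc : ∀ (a : V) (w : G.Walk a a), w.IsCycle → w.length < 4) (r : V)
    {T : Finset V} (hT : G.IsNClique 3 T) :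
    ∃ u x y : V, G.Adj u x ∧ G.Adj u y ∧ G.Adj x y ∧
      G.dist r x = G.dist r u + 1 ∧ G.dist r y = G.dist r u + 1 ∧ T = {u, x, y} := by
  obtain ⟨a, b, c, hab', hac', hbc', rfl⟩ := Finset.card_eq_three.mp hT.card_eq
  have hab : G.Adj a b := hT.isClique (by simp) (by simp) hab'
  have hac : G.Adj a c := hT.isClique (by simp) (by simp) hac'
  have hbc : G.Adj b c := hT.isClique (by simp) (by simp) hbc'
  rcases le_total (G.dist r a) (G.dist r b) with h | h
  · rcases le_total (G.dist r a) (G.dist r c) with h' | h'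
    · obtain ⟨e1, e2⟩ := tri_min hconn hcyc r hab hac hbc h h'
      exact ⟨a, b, c, hab, hac, hbc, e1, e2, rfl⟩
    · obtain ⟨e1, e2⟩ := tri_min hconn hcyc r hac.symm hbc.symm hab h' (h'.trans h)
      exact ⟨c, a, b, hac.symm, hbc.symm, hab, e1, e2, by ext z; simp; tauto⟩
  · rcases le_total (G.dist r b) (G.dist r c) with h' | h'
    · obtain ⟨e1, e2⟩ := tri_min hconn hcyc r hab.symm hbc hac h h'
      exact ⟨b, a, c, hab.symm, hbc, hac, e1, e2, by ext z; simp; tauto⟩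
    · obtain ⟨e1, e2⟩ := tri_min hconn hcyc r hac.symm hbc.symm hab (h'.trans h) h'
      exact ⟨c, a, b, hac.symm, hbc.symm, hab, e1, e2, by ext z; simp; tauto⟩

lemma far_struct (hconn : G.Connected)
    (hcyc : ∀ (a : V) (w : G.Walk a a), w.IsCycle → w.length < 4) (r : V)
    {T : Finset V} (hT : G.IsNClique 3 T) {v : V} (hv : v ∈ T)
    (hfar : ∃ u ∈ T, G.dist r u < G.dist r v) :
    ∃ u a' : V, G.Adj u v ∧ G.Adj u a' ∧ G.Adj a' v ∧ G.dist r v = G.dist r u + 1 ∧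
      T = {u, v, a'} := by
  obtain ⟨u, x, y, hux, huy, hxy, ex, ey, rfl⟩ := tri_struct hconn hcyc r hT
  have hvmem : v = u ∨ v = x ∨ v = y := by simpa using hv
  rcases hvmem with h | h | h
  · exfalso
    obtain ⟨u', hu', hlt⟩ := hfar
    rw [h] at hlt
    have : u' = u ∨ u' = x ∨ u' = y := by simpa using hu'
    rcases this with h' | h' | h' <;> rw [h'] at hlt <;> omega
  · subst h
    exact ⟨u, y, hux, huy, hxy.symm, ex, rfl⟩
  · subst h
    exact ⟨u, x, huy, hux, hxy, ey, by ext z; simp; tauto⟩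


end Stmt11Aux

open Stmt11Aux in
theorem stmt_11 {V : Type*} [Fintype V] (G : SimpleGraph V) (n : ℕ)
    (hn : Fintype.card V = n) (hn2 : 2 ≤ n) (hconn : G.Connected)
    (hcyc : ∀ (a : V) (w : G.Walk a a), w.IsCycle → w.length < 4) :
    (G.cliqueSet 3).ncard ≤ (n - 1) / 2 := by
  classical
  have hnev : Nonempty V := Fintype.card_pos_iff.mp (by omega)
  obtain ⟨r⟩ := hnev
  have hncard : (G.cliqueSet 3).ncard = (G.cliqueFinset 3).card := by
    rw [← coe_cliqueFinset, Set.ncard_coe_finset]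
  set F : Finset V → Finset V :=
    fun T => T.filter (fun v => ∃ u ∈ T, G.dist r u < G.dist r v) with hF
  have hFsub : ∀ T, F T ⊆ Finset.univ.erase r := by
    intro T v hvF
    rw [hF, Finset.mem_filter] at hvF
    obtain ⟨hvT, u, huT, hlt⟩ := hvF
    refine Finset.mem_erase.mpr ⟨?_, Finset.mem_univ _⟩
    intro h
    rw [h, SimpleGraph.dist_self] at hlt
    omega
  have hFcard : ∀ T ∈ G.cliqueFinset 3, (F T).card = 2 := by
    intro T hT
    have hT' : G.IsNClique 3 T := (mem_cliqueFinset_iff).mp hT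
    obtain ⟨u, x, y, hux, huy, hxy, ex, ey, rfl⟩ := tri_struct hconn hcyc r hT'
    have hFT : F {u, x, y} = {x, y} := by
      ext z
      rw [hF, Finset.mem_filter]
      simp only [Finset.mem_insert, Finset.mem_singleton]
      constructor
      · rintro ⟨hz, u', hu', hlt⟩
        rcases hz with h | h | h
        · exfalso
          rw [h] at hlt
          have : u' = u ∨ u' = x ∨ u' = y := by simpa using hu'
          rcases this with h' | h' | h' <;> rw [h'] at hlt <;> omega
        · exact Or.inl h
        · exact Or.inr h
      · rintro (h | h) <;> rw [h]
        · exact ⟨Or.inr (Or.inl rfl), u, by simp, by omega⟩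
        · exact ⟨Or.inr (Or.inr rfl), u, by simp, by omega⟩
    rw [hFT]
    exact Finset.card_pair hxy.ne
  have hdisj : ∀ T1 ∈ G.cliqueFinset 3, ∀ T2 ∈ G.cliqueFinset 3,
      T1 ≠ T2 → Disjoint (F T1) (F T2) := by
    intro T1 h1 T2 h2 hne12
    rw [Finset.disjoint_left]
    intro v hv1 hv2
    have hv1' := hv1; have hv2' := hv2
    rw [hF, Finset.mem_filter] at hv1' hv2'
    obtain ⟨u1, a1, hu1v, hu1a1, ha1v, hd1, hT1eq⟩ :=
      far_struct hconn hcyc r ((mem_cliqueFinset_iff).mp h1) hv1'.1 hv1'.2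
    obtain ⟨u2, a2, hu2v, hu2a2, ha2v, hd2, hT2eq⟩ :=
      far_struct hconn hcyc r ((mem_cliqueFinset_iff).mp h2) hv2'.1 hv2'.2
    have hu12 : u1 = u2 := unique_parent hconn hcyc r hu1v hu2v (by omega) hd1
    subst hu12
    have ha12 : a1 ≠ a2 := by
      intro h
      apply hne12
      rw [hT1eq, hT2eq, h]
    have huv : u1 ≠ v := by
      intro h
      rw [h] at hd1
      omega
    exact no4 hcyc hu1a1.symm hu2a2 ha2v ha1v.symm ha12 huv
  have hsum : ∑ T ∈ G.cliqueFinset 3, (F T).card = ((G.cliqueFinset 3).biUnion F).card :=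
    (Finset.card_biUnion hdisj).symm
  have hle : ((G.cliqueFinset 3).biUnion F).card ≤ (Finset.univ.erase r).card := by
    apply Finset.card_le_card
    intro v hv
    obtain ⟨T, hT, hvT⟩ := Finset.mem_biUnion.mp hv
    exact hFsub T hvT
  have herase : (Finset.univ.erase r).card = n - 1 := by
    rw [Finset.card_erase_of_mem (Finset.mem_univ r), Finset.card_univ, hn]
  have hmain : 2 * (G.cliqueFinset 3).card ≤ n - 1 := by
    calc 2 * (G.cliqueFinset 3).card = ∑ _T ∈ G.cliqueFinset 3, 2 := by
          rw [Finset.sum_const, smul_eq_mul, mul_comm]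
      _ = ∑ T ∈ G.cliqueFinset 3, (F T).card :=
          Finset.sum_congr rfl (fun T hT => (hFcard T hT).symm)
      _ = ((G.cliqueFinset 3).biUnion F).card := hsum
      _ ≤ (Finset.univ.erase r).card := hle
      _ = n - 1 := herase
  rw [hncard]
  omega
end

section
/- Let k ≥ 4 and n ≥ 3 with n-2 = r(k-3) + t and 0 ≤ t ≤ k-4. The graph X_{n,k}, whose vertex set is partitioned into an edge A = {u,v}, a set B that is a disjoint union of r cliques of size k-3, and a clique C of size t, with all edges present between A and B ∪ C, is 2-connected (for n ≥ 3), and no cycle of X_{n,k} containing the edge uv has length k or more. -/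
/-- The graph `X_{n,k}` (with `n = 2 + r*(k-3) + t`): an edge `A = {u,v}`
(the two vertices of `Fin 2`), a union `B` of `r` disjoint cliques of size
`k-3` (the pairs in `Fin r × Fin (k-3)`), a clique `C` of size `t`, and all
edges between `A` and `B ∪ C`. -/
def Xgraph (r m t : ℕ) : SimpleGraph (Fin 2 ⊕ (Fin r × Fin m) ⊕ Fin t) :=
  SimpleGraph.fromRel fun a b =>
    match a, b with
    | Sum.inl _, _ => True
    | _, Sum.inl _ => True
    | Sum.inr (Sum.inl p), Sum.inr (Sum.inl q) => p.1 = q.1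
    | Sum.inr (Sum.inr _), Sum.inr (Sum.inr _) => True
    | _, _ => False



abbrev Vt (r m t : ℕ) := Fin 2 ⊕ (Fin r × Fin m) ⊕ Fin t

lemma X_adj_inl {r m t : ℕ} (i : Fin 2) (b : Vt r m t) (h : Sum.inl i ≠ b) :
    (Xgraph r m t).Adj (Sum.inl i) b := by
  rw [Xgraph, SimpleGraph.fromRel_adj]
  refine ⟨h, Or.inl ?_⟩
  rcases b with b | b | b <;> trivial

def blk {r m t : ℕ} : Vt r m t → Option (Fin r ⊕ Unit)
  | Sum.inl _ => none
  | Sum.inr (Sum.inl p) => some (Sum.inl p.1)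
  | Sum.inr (Sum.inr _) => some (Sum.inr ())

lemma adj_blk {r m t : ℕ} {a b : Vt r m t} (h : (Xgraph r m t).Adj a b)
    (ha : blk a ≠ none) (hb : blk b ≠ none) : blk b = blk a := by
  rw [Xgraph, SimpleGraph.fromRel_adj] at h
  rcases a with a | a | a <;> rcases b with b | b | b <;>
    simp_all [blk] <;> tauto

lemma blk_chain {r m t : ℕ} (a : Vt r m t) (M : List (Vt r m t))
    (hch : List.Chain (Xgraph r m t).Adj a M)
    (hb : ∀ x ∈ a :: M, blk x ≠ none) :
    ∀ x ∈ M, blk x = blk a := by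
  induction M generalizing a with
  | nil => simp
  | cons b M' ih =>
    obtain ⟨hab, hch'⟩ := List.chain_cons.mp hch
    have hba : blk b = blk a :=
      adj_blk hab (hb a (by simp)) (hb b (by simp))
    intro x hx
    rcases List.mem_cons.mp hx with rfl | hx
    · exact hba
    · rw [ih b hch' (fun y hy => hb y (by rcases List.mem_cons.mp hy with h1|h1 <;> simp [h1]))
        x hx, hba]

lemma blk_eq_inl {r m t : ℕ} {x : Vt r m t} {i : Fin r}
    (h : blk x = some (Sum.inl i)) : ∃ j, x = Sum.inr (Sum.inl (i, j)) := by
  rcases x with x | x | x <;> simp_all [blk]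
  exact ⟨x.2, by rw [← h]⟩

lemma blk_eq_inr {r m t : ℕ} {x : Vt r m t}
    (h : blk x = some (Sum.inr ())) : ∃ j, x = Sum.inr (Sum.inr j) := by
  rcases x with x | x | x <;> simp_all [blk]

lemma count_blk_inl {r m t : ℕ} (i : Fin r) (M : List (Vt r m t)) (hnd : M.Nodup)
    (hb : ∀ x ∈ M, blk x = some (Sum.inl i)) : M.length ≤ m := by
  rcases M with _ | ⟨a, M'⟩
  · simp
  · obtain ⟨j0, rfl⟩ := blk_eq_inl (hb a (List.mem_cons_self))
    set f : Vt r m t → Fin m := fun x => match x with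
      | Sum.inr (Sum.inl q) => q.2
      | _ => j0 with hf
    have hmap : ((Sum.inr (Sum.inl (i, j0)) :: M').map f).Nodup := by
      refine hnd.map_on ?_
      intro x hx y hy hxy
      obtain ⟨jx, rfl⟩ := blk_eq_inl (hb _ hx)
      obtain ⟨jy, rfl⟩ := blk_eq_inl (hb _ hy)
      simp only [hf] at hxy
      simp [hxy]
    calc (Sum.inr (Sum.inl (i, j0)) :: M').length
        = ((Sum.inr (Sum.inl (i, j0)) :: M').map f).length := (List.length_map _).symm
      _ ≤ Fintype.card (Fin m) := hmap.length_le_card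
      _ = m := Fintype.card_fin m

lemma count_blk_inr {r m t : ℕ} (M : List (Vt r m t)) (hnd : M.Nodup)
    (hb : ∀ x ∈ M, blk x = some (Sum.inr ())) : M.length ≤ t := by
  rcases M with _ | ⟨a, M'⟩
  · simp
  · obtain ⟨j0, rfl⟩ := blk_eq_inr (hb a (List.mem_cons_self))
    set f : Vt r m t → Fin t := fun x => match x with
      | Sum.inr (Sum.inr q) => q
      | _ => j0 with hf
    have hmap : ((Sum.inr (Sum.inr j0) :: M').map f).Nodup := by
      refine hnd.map_on ?_
      intro x hx y hy hxy
      obtain ⟨jx, rfl⟩ := blk_eq_inr (hb _ hx)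
      obtain ⟨jy, rfl⟩ := blk_eq_inr (hb _ hy)
      simp only [hf] at hxy
      simp [hxy]
    calc (Sum.inr (Sum.inr j0) :: M').length
        = ((Sum.inr (Sum.inr j0) :: M').map f).length := (List.length_map _).symm
      _ ≤ Fintype.card (Fin t) := hmap.length_le_card
      _ = t := Fintype.card_fin t

open SimpleGraph Walk in
lemma lemQ {r m t : ℕ} (htm : t ≤ m) {c : Vt r m t} (q : (Xgraph r m t).Walk (Sum.inl 1) c)
    (hnd : q.support.Nodup) (hu : (Sum.inl 0 : Vt r m t) ∉ q.support.tail) :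
    q.length ≤ m := by
  set M := q.support.tail with hM
  have hlen : q.length = M.length := by
    have h1 := q.length_support
    rw [q.support_eq_cons] at h1
    simp only [List.length_cons, hM] at h1 ⊢
    omega
  have hv : (Sum.inl 1 : Vt r m t) ∉ M := by
    have h2 := hnd
    rw [q.support_eq_cons] at h2
    exact (List.nodup_cons.mp h2).1
  have hinr : ∀ x ∈ M, blk x ≠ none := by
    intro x hx
    rcases x with x | x | x
    · fin_cases x
      · exact absurd hx hu
      · exact absurd hx hv
    · simp [blk]
    · simp [blk]
  have hndM : M.Nodup := by
    have h2 := hnd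
    rw [q.support_eq_cons] at h2
    exact (List.nodup_cons.mp h2).2
  have hchM : List.Chain' (Xgraph r m t).Adj M := by
    have := q.isChain_adj_support
    rw [q.support_eq_cons] at this
    exact this.tail
  rw [hlen]
  rcases hMe : M with _ | ⟨a, M'⟩
  · simp
  · have hba : ∀ x ∈ a :: M', blk x = blk a := by
      intro x hx
      rcases List.mem_cons.mp hx with rfl | hx
      · rfl
      · exact blk_chain a M' (by rw [hMe] at hchM; exact hchM) (by rw [← hMe]; exact hinr) x hx
    have hanone : blk a ≠ none := hinr a (by rw [hMe]; exact List.mem_cons_self)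
    rw [hMe] at hndM
    rcases hblka : (blk a) with _ | (i | u)
    · exact absurd hblka hanone
    · exact count_blk_inl i (a :: M') hndM (fun x hx => by rw [hba x hx, hblka])
    · exact le_trans (count_blk_inr (a :: M') hndM (fun x hx => by rw [hba x hx, hblka])) htm

open SimpleGraph Walk in
lemma lemQ' {r m t : ℕ} (htm : t ≤ m)
    (q : (Xgraph r m t).Walk (Sum.inl 1) (Sum.inl 0))
    (hnd : q.support.Nodup) : q.length ≤ m + 1 := by
  obtain ⟨x, h', q', hq⟩ := Walk.exists_eq_cons_of_ne
    (by simp : (Sum.inl 0 : Vt r m t) ≠ Sum.inl 1) q.reverse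
  have hnd' : q.reverse.support.Nodup := by
    rw [Walk.support_reverse]; exact List.nodup_reverse.mpr hnd
  rw [hq] at hnd'
  rw [Walk.support_cons, List.nodup_cons] at hnd'
  have hu' : (Sum.inl 0 : Vt r m t) ∉ q'.reverse.support.tail := by
    intro hcon
    have h3 : (Sum.inl 0 : Vt r m t) ∈ q'.reverse.support := List.mem_of_mem_tail hcon
    rw [Walk.support_reverse, List.mem_reverse] at h3
    exact hnd'.1 h3
  have hb := lemQ htm q'.reverse
    (by rw [Walk.support_reverse]; exact List.nodup_reverse.mpr hnd'.2) hu'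
  have hlen : q.length = q'.length + 1 := by
    have := q.length_reverse
    rw [hq] at this
    simp at this
    omega
  rw [Walk.length_reverse] at hb
  omega

open SimpleGraph Walk in
lemma first_edge {r m t : ℕ} (htm : t ≤ m) {c : Vt r m t}
    (q : (Xgraph r m t).Walk (Sum.inl 0) c)
    (hnd : q.support.Nodup)
    (he : s((Sum.inl 0 : Vt r m t), Sum.inl 1) ∈ q.edges) :
    q.length ≤ m + 1 := by
  cases q with
  | nil => simp at he
  | @cons _ b _ h p =>
    rw [Walk.edges_cons, List.mem_cons] at he
    rw [Walk.support_cons, List.nodup_cons] at hnd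
    rcases he with he | he
    · have hb : (Sum.inl 1 : Vt r m t) = b := Sym2.congr_right.mp he
      subst hb
      have hu' : (Sum.inl 0 : Vt r m t) ∉ p.support.tail := fun hcon =>
        hnd.1 (List.mem_of_mem_tail hcon)
      have := lemQ htm p hnd.2 hu'
      simp only [Walk.length_cons]
      omega
    · exact absurd (Walk.fst_mem_support_of_mem_edges p he) hnd.1

open SimpleGraph Walk in
lemma cycle_bound {r m t : ℕ} (htm : t ≤ m)
    (w : (Xgraph r m t).Walk (Sum.inl 0) (Sum.inl 0))
    (hc : w.IsCycle) (he : s((Sum.inl 0 : Vt r m t), Sum.inl 1) ∈ w.edges) :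
    w.length ≤ m + 2 := by
  cases w with
  | nil => exact absurd rfl hc.ne_nil
  | @cons _ b _ h p =>
    have hnd : p.support.Nodup := by
      have := hc.support_nodup
      rwa [Walk.support_cons, List.tail_cons] at this
    rw [Walk.edges_cons, List.mem_cons] at he
    rcases he with he | he
    · have hb : (Sum.inl 1 : Vt r m t) = b := Sym2.congr_right.mp he
      subst hb
      have := lemQ' htm p hnd
      simp only [Walk.length_cons]
      omega
    · have hnd' : p.reverse.support.Nodup := by
        rw [Walk.support_reverse]; exact List.nodup_reverse.mpr hnd
      have he' : s((Sum.inl 0 : Vt r m t), Sum.inl 1) ∈ p.reverse.edges := by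
        rw [Walk.edges_reverse, List.mem_reverse]; exact he
      have := first_edge htm p.reverse hnd' he'
      rw [Walk.length_reverse] at this
      simp only [Walk.length_cons]
      omega


open SimpleGraph in
theorem stmt_15 (r k t n : ℕ) (hk : 4 ≤ k) (ht : t ≤ k - 4)
    (hn : n = 2 + r * (k - 3) + t) (hn3 : 3 ≤ n) :
    TwoConnected (Xgraph r (k - 3) t) ∧
      ∀ (a : Fin 2 ⊕ (Fin r × Fin (k - 3)) ⊕ Fin t)
        (w : (Xgraph r (k - 3) t).Walk a a), w.IsCycle →
          s((Sum.inl 0 : Fin 2 ⊕ (Fin r × Fin (k - 3)) ⊕ Fin t), Sum.inl 1) ∈ w.edges →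
          w.length < k := by
  have htm : t ≤ k - 3 := le_trans ht (by omega)
  constructor
  · constructor
    · have hcard : Nat.card (Vt r (k - 3) t) = 2 + r * (k - 3) + t := by
        simp [Nat.card_eq_fintype_card]
        ring
      rw [hcard]
      omega
    · intro v0
      obtain ⟨h0, hne, hadj⟩ : ∃ h0 : Vt r (k - 3) t, h0 ≠ v0 ∧
          ∀ x : Vt r (k - 3) t, h0 ≠ x → (Xgraph r (k - 3) t).Adj h0 x := by
        by_cases hv : v0 = Sum.inl 0
        · exact ⟨Sum.inl 1, by simp [hv], fun x hx => X_adj_inl 1 x hx⟩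
        · exact ⟨Sum.inl 0, fun hh => hv hh.symm, fun x hx => X_adj_inl 0 x hx⟩
      rw [SimpleGraph.connected_iff]
      have key : ∀ x : {w : Vt r (k - 3) t | w ≠ v0},
          ((Xgraph r (k - 3) t).induce {w : Vt r (k - 3) t | w ≠ v0}).Reachable
            ⟨h0, hne⟩ x := by
        intro x
        by_cases hx : h0 = x.1
        · have hxx : (⟨h0, hne⟩ : {w : Vt r (k - 3) t | w ≠ v0}) = x := Subtype.ext hx
          rw [hxx]
        · exact SimpleGraph.Adj.reachable (hadj x.1 hx)
      exact ⟨fun x y => (key x).symm.trans (key y), ⟨⟨h0, hne⟩⟩⟩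
  · intro a w hc he
    have hu : (Sum.inl 0 : Vt r (k - 3) t) ∈ w.support :=
      Walk.fst_mem_support_of_mem_edges w he
    have hc' := hc.rotate hu
    have he' : s((Sum.inl 0 : Vt r (k - 3) t), Sum.inl 1) ∈ (w.rotate _ hu).edges :=
      ((Walk.rotate_edges w _ hu).mem_iff).mpr he
    have hlen : (w.rotate _ hu).length = w.length := by
      have h1 := (Walk.rotate_edges w _ hu).perm.length_eq
      rwa [Walk.length_edges, Walk.length_edges] at h1
    have hb := cycle_bound htm (w.rotate _ hu) hc' he'
    omega
end

section
/- Let G be a 2-connected graph in which a vertex u is adjacent to all other vertices, and let uv be an edge such that no cycle of G through uv has length at least k, where k ≥ 4. Then G - u has no cycle of length at least k-1. -/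
open SimpleGraph Walk

lemma first_contact_aux {V : Type*} {G : SimpleGraph V} (S : Set V) :
    ∀ {v a : V} (Q : G.Walk v a), Q.IsPath → a ∈ S →
    ∃ (x : V) (P : G.Walk v x), P.IsPath ∧ x ∈ S ∧ (∀ y ∈ P.support, y ∈ Q.support) ∧
      (∀ y ∈ P.support, y ∈ S → y = x) := by
  intro v a Q
  induction Q with
  | nil =>
    intro _ ha
    refine ⟨_, Walk.nil, IsPath.nil, ha, ?_, ?_⟩ <;> simp
  | @cons b c d h q ih =>
    intro hQ ha
    by_cases hb : b ∈ S
    · refine ⟨b, Walk.nil, IsPath.nil, hb, ?_, ?_⟩ <;> simp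
    · obtain ⟨x, P, hP, hxS, hsub, hlast⟩ := ih hQ.of_cons ha
      have hbP : b ∉ P.support := fun hmem => by
        have := hsub b hmem
        exact ((Walk.cons_isPath_iff h q).mp hQ).2 this
      refine ⟨x, Walk.cons h P, hP.cons hbP, hxS, ?_, ?_⟩
      · intro y hy
        simp only [Walk.support_cons, List.mem_cons] at hy ⊢
        rcases hy with rfl | hy
        · exact Or.inl rfl
        · exact Or.inr (hsub y hy)
      · intro y hy hyS
        simp only [Walk.support_cons, List.mem_cons] at hy
        rcases hy with rfl | hy
        · exact absurd hyS hb
        · exact hlast y hy hyS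

/-- membership in support of a closed nontrivial walk equals membership in its support tail -/
lemma closed_mem_support_tail {V : Type*} {G : SimpleGraph V} {c : V} {n : G.Walk c c}
    (hn : ¬ n.Nil) {y : V} : y ∈ n.support ↔ y ∈ n.support.tail := by
  constructor
  · intro hy
    rw [Walk.support_eq_cons, List.mem_cons] at hy
    rcases hy with rfl | hy
    · rw [← Walk.cons_support_tail hn, List.tail_cons]
      exact Walk.end_mem_support n.tail
    · exact hy
  · intro hy
    rw [Walk.support_eq_cons]
    exact List.mem_cons_of_mem _ hy

theorem stmt_17 {V : Type*} (G : SimpleGraph V) (u v : V) (k : ℕ)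
    (hk : 4 ≤ k) (h2c : TwoConnected G)
    (hdom : ∀ w : V, w ≠ u → G.Adj u w) (huv : G.Adj u v)
    (hcyc : ∀ (a : V) (w : G.Walk a a), w.IsCycle → s(u, v) ∈ w.edges → w.length < k) :
    ∀ (a : {w : V // w ∈ {w : V | w ≠ u}})
      (w : (G.induce {w : V | w ≠ u}).Walk a a), w.IsCycle → w.length < k - 1 := by
  classical
  intro a w hw
  by_contra hlen
  push_neg at hlen
  -- the inclusion homomorphism
  let f : (G.induce {w : V | w ≠ u}) →g G := ⟨Subtype.val, fun h => h⟩
  have hfinj : Function.Injective f := Subtype.val_injective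
  -- the cycle C in G avoiding u
  set C : G.Walk a.val a.val := w.map f with hCdef
  have hC : C.IsCycle := hw.map hfinj
  have hClen : C.length = w.length := Walk.length_map _ _
  have hCu : ∀ y ∈ C.support, y ≠ u := by
    intro y hy
    rw [hCdef, Walk.support_map, List.mem_map] at hy
    obtain ⟨s, _, rfl⟩ := hy
    exact s.property
  have hv : v ≠ u := huv.ne'
  -- a path from v to a.val in G avoiding u
  obtain ⟨R0⟩ := ((h2c.2 u) ⟨v, hv⟩ a)
  set Q : G.Walk v a.val := (R0.map f).toPath.1 with hQdef
  have hQpath : Q.IsPath := (R0.map f).toPath.2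
  have hQu : ∀ y ∈ Q.support, y ≠ u := by
    intro y hy
    have := Walk.support_toPath_subset (R0.map f) hy
    rw [Walk.support_map, List.mem_map] at this
    obtain ⟨s, _, rfl⟩ := this
    exact s.property
  -- first contact with C.support
  have haS : a.val ∈ {y : V | y ∈ C.support} := Walk.start_mem_support C
  obtain ⟨x, P, hP, hxC, hPsub, hPlast⟩ := first_contact_aux {y : V | y ∈ C.support} Q hQpath haS
  have hxC' : x ∈ C.support := hxC
  -- rotate C at x
  set C' : G.Walk x x := C.rotate x hxC' with hC'def
  have hC'cyc : C'.IsCycle := hC.rotate hxC'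
  have hC'len : C'.length = C.length := by
    rw [← Walk.length_darts, ← Walk.length_darts]
    exact (Walk.rotate_darts C x hxC').perm.length_eq
  have hC'memiff : ∀ y, y ∈ C'.support ↔ y ∈ C.support := by
    intro y
    have h1 : ¬ C'.Nil := hC'cyc.not_nil
    have h2 : ¬ C.Nil := hC.not_nil
    rw [closed_mem_support_tail h1, closed_mem_support_tail h2]
    exact (Walk.support_rotate C x hxC').mem_iff
  -- destructure C'
  have : ∃ (z : V) (hxz : G.Adj x z) (p : G.Walk z x), C' = Walk.cons hxz p := by
    cases hcc : C' with
    | nil => rw [hcc] at hC'cyc; exact absurd rfl hC'cyc.ne_nil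
    | cons hxz p => exact ⟨_, hxz, p, rfl⟩
  obtain ⟨z, hxz, p, hC'eq⟩ := this
  have hp : p.IsPath ∧ s(x, z) ∉ p.edges := by
    rw [hC'eq, Walk.cons_isCycle_iff] at hC'cyc
    exact hC'cyc
  have hplen : p.length + 1 = C.length := by
    rw [← hC'len, hC'eq]; simp
  have hpsubC : ∀ y ∈ p.support, y ∈ C.support := by
    intro y hy
    rw [← hC'memiff, hC'eq, Walk.support_cons]
    exact List.mem_cons_of_mem _ hy
  have hzC : z ∈ C.support := hpsubC z (Walk.start_mem_support p)
  have hzu : G.Adj z u := (hdom z (hCu z hzC)).symm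
  -- support facts for P
  have hPu : ∀ y ∈ P.support, y ≠ u := fun y hy => hQu y (hPsub y hy)
  -- build the big cycle
  set W' : G.Walk v u := P.append (p.reverse.concat hzu) with hW'def
  set W : G.Walk u u := Walk.cons huv W' with hWdef
  -- key disjointness: members of P.support in C.support are exactly x
  have hxnotptail : x ∉ p.reverse.support.tail := by
    have : p.reverse.support.Nodup := hp.1.reverse.support_nodup
    rw [Walk.support_eq_cons p.reverse] at this
    exact (List.nodup_cons.mp this).1
  have hptail_sub : ∀ y ∈ p.reverse.support.tail, y ∈ p.support := by
    intro y hy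
    have : y ∈ p.reverse.support := List.mem_of_mem_tail hy
    rwa [Walk.support_reverse, List.mem_reverse] at this
  have hW'support : W'.support = P.support ++ (p.reverse.support.tail ++ [u]) := by
    rw [hW'def, Walk.support_append, Walk.concat_eq_append, Walk.tail_support_append]
    simp
  have hptail_nodup : p.reverse.support.tail.Nodup := by
    have := hp.1.reverse.support_nodup
    rw [Walk.support_eq_cons p.reverse] at this
    exact (List.nodup_cons.mp this).2
  have hptail_ne_u : ∀ y ∈ p.reverse.support.tail, y ≠ u := by
    intro y hy
    exact hCu y (hpsubC y (hptail_sub y hy))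
  have hPnotTail : ∀ y ∈ P.support, y ∉ p.reverse.support.tail := by
    intro y hy hy2
    have hyC : y ∈ C.support := hpsubC y (hptail_sub y hy2)
    have hyx : y = x := hPlast y hy hyC
    subst hyx
    exact hxnotptail hy2
  have hW'path : W'.IsPath := by
    rw [Walk.isPath_def, hW'support, List.nodup_append]
    refine ⟨hP.support_nodup, ?_, ?_⟩
    · rw [List.nodup_append]
      refine ⟨hptail_nodup, List.nodup_singleton u, ?_⟩
      intro y hy
      simp only [List.mem_singleton]
      rintro b rfl
      exact hptail_ne_u y hy
    · intro y hy
      simp only [List.mem_append, List.mem_singleton]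
      rintro b (h | h)
      · exact fun e => hPnotTail y hy (e ▸ h)
      · exact fun e => hPu y hy (e.trans h)
  -- v is not on p (so the edge zu is not uv)
  have hzne_v : z ≠ v := by
    intro hzv
    have hvC : v ∈ {y : V | y ∈ C.support} := by
      show v ∈ C.support
      exact hzv ▸ hzC
    have hvx : v = x := hPlast v (Walk.start_mem_support P) hvC
    exact hxz.ne' (hzv.trans hvx)
  have hW'edges : s(u, v) ∉ W'.edges := by
    rw [hW'def, Walk.edges_append, Walk.edges_concat, List.concat_eq_append, List.mem_append,
      List.mem_append, List.mem_singleton]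
    push_neg
    refine ⟨?_, ?_, ?_⟩
    · intro hmem
      exact hPu u (Walk.fst_mem_support_of_mem_edges P hmem) rfl
    · intro hmem
      have : u ∈ p.reverse.support := Walk.fst_mem_support_of_mem_edges p.reverse hmem
      rw [Walk.support_reverse, List.mem_reverse] at this
      exact hCu u (hpsubC u this) rfl
    · intro heq
      rw [Sym2.eq_iff] at heq
      rcases heq with ⟨_, h2⟩ | ⟨_, h2⟩
      · exact hv h2
      · exact hzne_v h2.symm
  have hWcyc : W.IsCycle := by
    rw [hWdef, Walk.cons_isCycle_iff]
    exact ⟨hW'path, hW'edges⟩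
  have hWedge : s(u, v) ∈ W.edges := by
    rw [hWdef, Walk.edges_cons]
    exact List.mem_cons_self
  have hWlen : W.length = P.length + p.length + 2 := by
    rw [hWdef, Walk.length_cons, hW'def, Walk.length_append, Walk.length_concat,
      Walk.length_reverse]
    omega
  have hfinal := hcyc u W hWcyc hWedge
  have hL : k - 1 ≤ C.length := by omega
  omega
end
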